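/- arXiv:1610.06060 — 4 statements merged into one kernel-verified Lean document; each statement's English description precedes it below -/
import Mathlib

section
/- Let (G, B) be a biased graph, and let V_R ⊆ V(G) be a set of vertices such that the induced subgraph G[V_R] is connected and contains no unbalanced cycle. Let C be an unbalanced cycle of G. Then either C intersects the neighbourhood N(V_R) in at most one vertex, or there exists an unbalanced cycle C' such that: C' intersects V_R in a non-empty simple path, C' intersects N(V_R) in at most two vertices, and the vertices of C' outside V_R form a subset of the vertices of C outside V_R. -/
open SimpleGraph

/-- The open neighbourhood `N(S)` of a vertex set. -/
def nbhd {V : Type*} (G : SimpleGraph V) (S : Set V) : Set V :=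
  {v | v ∉ S ∧ ∃ u ∈ S, G.Adj u v}

/-- Three internally vertex-disjoint paths between two distinct vertices: a theta graph. -/
def IsTheta {V : Type*} (G : SimpleGraph V) {a b : V} (p1 p2 p3 : G.Walk a b) : Prop :=
  a ≠ b ∧ p1.IsPath ∧ p2.IsPath ∧ p3.IsPath ∧
  (∀ x, x ∈ p1.support → x ∈ p2.support → x = a ∨ x = b) ∧
  (∀ x, x ∈ p1.support → x ∈ p3.support → x = a ∨ x = b) ∧
  (∀ x, x ∈ p2.support → x ∈ p3.support → x = a ∨ x = b)

/-- A class of balanced cycles (given by their edge sets) is linear if whenever two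
balanced cycles form a theta graph, the third cycle of the theta is balanced. -/
def IsLinearClass {V : Type*} (G : SimpleGraph V) (Bal : Set (Sym2 V) → Prop) : Prop :=
  ∀ (a b : V) (p1 p2 p3 : G.Walk a b), IsTheta G p1 p2 p3 →
    Bal {e | e ∈ p1.edges ∨ e ∈ p2.edges} →
    Bal {e | e ∈ p1.edges ∨ e ∈ p3.edges} →
    Bal {e | e ∈ p2.edges ∨ e ∈ p3.edges}

/-- `G[A]` is balanced: every simple cycle with all vertices in `A` is balanced. -/
def BalancedOn {V : Type*} (G : SimpleGraph V) (Bal : Set (Sym2 V) → Prop) (A : Set V) : Prop :=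
  ∀ (u : V) (w : G.Walk u u), w.IsCycle → (∀ y ∈ w.support, y ∈ A) →
    Bal {e | e ∈ w.edges}


section Helpers
open SimpleGraph Walk

variable {V : Type*} {G : SimpleGraph V}

/-- A path from `x` to `y` containing the edge `s(x,y)` is a single edge. -/
lemma path_length_one_of_edge {x y : V} {p : G.Walk x y} (hp : p.IsPath)
    (he : s(x, y) ∈ p.edges) : p.length = 1 := by
  cases p with
  | nil => simp at he
  | cons h q =>
    obtain ⟨hq, hx⟩ := (Walk.cons_isPath_iff h q).1 hp
    rw [Walk.edges_cons, List.mem_cons] at he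
    rcases he with he | he
    · rw [Sym2.eq_iff] at he
      rcases he with ⟨-, rfl⟩ | ⟨rfl, rfl⟩
      · have : q = Walk.nil := by
          cases q with
          | nil => rfl
          | cons h' q' =>
            exfalso
            obtain ⟨-, hy⟩ := (Walk.cons_isPath_iff h' q').1 hq
            have := hq.support_nodup
            rw [Walk.support_cons] at this
            exact (List.nodup_cons.1 this).1 (Walk.end_mem_support q')
        subst this; rfl
      · exact absurd h (G.irrefl)
    · exact absurd (Walk.fst_mem_support_of_mem_edges q he) hx

/-- end of a non-nil walk is in the tail of its support -/
lemma end_mem_support_tail {s t : V} (w : G.Walk s t) (hw : ¬ w.Nil) : t ∈ w.support.tail := by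
  cases w with
  | nil => simp at hw
  | cons h q => simpa using Walk.end_mem_support q

/-- Rotating an append of two walks preserves being a cycle. -/
lemma isCycle_swap {x y : V} {σ : G.Walk x y} {τ : G.Walk y x}
    (h : (σ.append τ).IsCycle) : (τ.append σ).IsCycle := by
  constructor
  · constructor
    · have := h.isTrail
      rw [Walk.isTrail_def] at this ⊢
      rw [Walk.edges_append] at this ⊢
      exact (List.perm_append_comm.nodup_iff).2 this
    · intro hne
      have h0 : (τ.append σ).length = 0 := by rw [hne]; rfl
      rw [Walk.length_append] at h0
      have h0' : (σ.append τ).length = 0 := by rw [Walk.length_append]; omega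
      exact h.isCircuit.not_nil (Walk.nil_iff_length_eq.2 h0')
  · have := h.support_nodup
    rw [Walk.tail_support_append] at this ⊢
    exact (List.perm_append_comm.nodup_iff).2 this

variable {V : Type*} {G : SimpleGraph V}

/-- If a cycle decomposes as `σ.append τ` at two distinct vertices, the two pieces are
paths which meet only at the two vertices. -/
lemma split_of_append_cycle {x y : V} {σ : G.Walk x y} {τ : G.Walk y x}
    (hxy : x ≠ y) (h : (σ.append τ).IsCycle) :
    σ.IsPath ∧ τ.IsPath ∧ (∀ s, s ∈ σ.support → s ∈ τ.support → s = x ∨ s = y) := by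
  have hnd := h.support_nodup
  rw [Walk.tail_support_append] at hnd
  rw [List.nodup_append] at hnd
  obtain ⟨h1, h2, hdisj⟩ := hnd
  have hσne : ¬ σ.Nil := fun hn => hxy (Walk.Nil.eq hn)
  have hτne : ¬ τ.Nil := fun hn => hxy (Walk.Nil.eq hn).symm
  have hyσ : y ∈ σ.support.tail := end_mem_support_tail σ hσne
  have hxτ : x ∈ τ.support.tail := end_mem_support_tail τ hτne
  have hxσ : x ∉ σ.support.tail := fun hx => hdisj x hx x hxτ rfl
  have hyτ : y ∉ τ.support.tail := fun hy => hdisj y hyσ y hy rfl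
  refine ⟨?_, ?_, ?_⟩
  · rw [Walk.isPath_def, Walk.support_eq_cons]
    exact List.nodup_cons.2 ⟨hxσ, h1⟩
  · rw [Walk.isPath_def, Walk.support_eq_cons]
    exact List.nodup_cons.2 ⟨hyτ, h2⟩
  · intro s hs ht
    rw [Walk.support_eq_cons] at hs ht
    rcases List.mem_cons.1 hs with rfl | hs'
    · exact Or.inl rfl
    rcases List.mem_cons.1 ht with rfl | ht'
    · exact Or.inr rfl
    exact absurd (hdisj s hs' s ht' rfl) (fun h => h)
/-- Splitting a cycle at two distinct support vertices. -/
lemma cycle_split {r x y : V} (D : G.Walk r r) (hD : D.IsCycle)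
    (hx : x ∈ D.support) (hy : y ∈ D.support) (hxy : x ≠ y) :
    ∃ (σ τ : G.Walk x y), σ.IsPath ∧ τ.IsPath ∧
      (∀ s, s ∈ D.support ↔ (s ∈ σ.support ∨ s ∈ τ.support)) ∧
      (∀ e, e ∈ D.edges ↔ (e ∈ σ.edges ∨ e ∈ τ.edges)) ∧
      (∀ s, s ∈ σ.support → s ∈ τ.support → s = x ∨ s = y) := by
  classical
  have hDnil : ¬ D.Nil := hD.isCircuit.not_nil
  -- mem of tail
  have tail_mem : ∀ s, s ∈ D.support ↔ s ∈ D.support.tail := by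
    intro s
    constructor
    · intro hs
      rw [Walk.support_eq_cons] at hs
      rcases List.mem_cons.1 hs with rfl | h'
      · exact end_mem_support_tail D hDnil
      · exact h'
    · intro hs
      rw [Walk.support_eq_cons]; exact List.mem_cons.2 (Or.inr hs)
  set R := D.rotate x hx with hR
  have hRc : R.IsCycle := hD.rotate hx
  have hrot := Walk.support_rotate D x hx
  have memR : ∀ s, s ∈ R.support ↔ s ∈ D.support := by
    intro s
    rw [tail_mem s, Walk.support_eq_cons (p := R), List.mem_cons, hrot.perm.mem_iff]
    constructor
    · rintro (h | h)
      · exact h ▸ (tail_mem x).1 hx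
      · exact h
    · exact Or.inr
  have memRE : ∀ e, e ∈ R.edges ↔ e ∈ D.edges := fun e => (Walk.rotate_edges D x hx).perm.mem_iff
  have hyR : y ∈ R.support := (memR y).2 hy
  set σ := R.takeUntil y hyR with hσ
  set τ' := R.dropUntil y hyR with hτ'
  have hspec : σ.append τ' = R := Walk.take_spec R hyR
  have hRc' : (σ.append τ').IsCycle := by rw [hspec]; exact hRc
  obtain ⟨hσp, hτ'p, hdisj⟩ := split_of_append_cycle hxy hRc'
  refine ⟨σ, τ'.reverse, hσp, hτ'p.reverse, ?_, ?_, ?_⟩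
  · intro s
    rw [← memR s, ← hspec, Walk.mem_support_append_iff, Walk.support_reverse, List.mem_reverse]
  · intro e
    rw [← memRE e, ← hspec, Walk.edges_append, List.mem_append, Walk.edges_reverse,
      List.mem_reverse]
  · intro s hs ht
    rw [Walk.support_reverse, List.mem_reverse] at ht
    exact hdisj s hs ht

/-- Gluing two internally disjoint paths into a cycle. -/
lemma cycle_glue {x y : V} {p q : G.Walk x y} (hp : p.IsPath) (hq : q.IsPath)
    (hxy : x ≠ y) (hlen : 2 ≤ p.length)
    (hdisj : ∀ s, s ∈ p.support → s ∈ q.support → s = x ∨ s = y) :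
    (p.append q.reverse).IsCycle := by
  have hxp : x ∉ p.support.tail := by
    have := hp.support_nodup
    rw [Walk.support_eq_cons] at this
    exact (List.nodup_cons.1 this).1
  have hyq : y ∉ q.reverse.support.tail := by
    have := hq.reverse.support_nodup
    rw [Walk.support_eq_cons] at this
    exact (List.nodup_cons.1 this).1
  constructor
  · constructor
    · -- trail
      rw [Walk.isTrail_def, Walk.edges_append, List.nodup_append]
      refine ⟨hp.isTrail.edges_nodup, hq.reverse.isTrail.edges_nodup, ?_⟩
      intro e hep e' heq hee'
      subst hee'
      rw [Walk.edges_reverse, List.mem_reverse] at heq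
      induction e with
      | h a b =>
        have hab : G.Adj a b := p.adj_of_mem_edges hep
        have hap : a ∈ p.support := Walk.fst_mem_support_of_mem_edges p hep
        have hbp : b ∈ p.support := Walk.snd_mem_support_of_mem_edges p hep
        have haq : a ∈ q.support := Walk.fst_mem_support_of_mem_edges q heq
        have hbq : b ∈ q.support := Walk.snd_mem_support_of_mem_edges q heq
        have ha := hdisj a hap haq
        have hb := hdisj b hbp hbq
        have : s(a, b) = s(x, y) := by
          rcases ha with rfl | rfl <;> rcases hb with rfl | rfl
          · exact absurd rfl hab.ne
          · rfl
          · rw [Sym2.eq_swap]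
          · exact absurd rfl hab.ne
        rw [this] at hep
        have := path_length_one_of_edge hp hep
        omega
    · -- not nil
      intro hne
      have h0 : (p.append q.reverse).length = 0 := by rw [hne]; rfl
      rw [Walk.length_append] at h0
      omega
  · rw [Walk.tail_support_append, List.nodup_append]
    refine ⟨List.Nodup.of_cons (by rw [← Walk.support_eq_cons]; exact hp.support_nodup),
      List.Nodup.of_cons (by rw [← Walk.support_eq_cons]; exact hq.reverse.support_nodup), ?_⟩
    intro s hs t ht hst
    subst hst
    have hs' : s ∈ p.support := by rw [Walk.support_eq_cons]; exact List.mem_cons.2 (Or.inr hs)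
    have ht'' : s ∈ q.reverse.support := by
      rw [Walk.support_eq_cons (p := q.reverse)]; exact List.mem_cons.2 (Or.inr ht)
    have ht' : s ∈ q.support := by rwa [Walk.support_reverse, List.mem_reverse] at ht''
    rcases hdisj s hs' ht' with rfl | rfl
    · exact hxp hs
    · exact hyq ht
/-- mini: a walk whose support contains a vertex other than the endpoints has length ≥ 2. -/
lemma two_le_length_of_mem {x y μ : V} (σ : G.Walk x y) (hμ : μ ∈ σ.support)
    (h1 : μ ≠ x) (h2 : μ ≠ y) : 2 ≤ σ.length := by
  cases σ with
  | nil =>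
    simp only [Walk.support_nil, List.mem_singleton] at hμ
    exact absurd hμ h1
  | cons h q =>
    cases q with
    | nil =>
      simp only [Walk.support_cons, Walk.support_nil, List.mem_cons, List.mem_singleton,
        List.not_mem_nil, or_false] at hμ
      rcases hμ with rfl | rfl
      · exact absurd rfl h1
      · exact absurd rfl h2
    | cons h' q' => simp only [Walk.length_cons]; omega

/-- first entry of a walk into a set -/
lemma first_entry (A : Set V) : ∀ {s t : V} (p : G.Walk s t), s ∉ A →
    (∃ y ∈ p.support, y ∈ A) →
    ∃ (u a : V) (w1 : G.Walk s u) (hadj : G.Adj u a) (w2 : G.Walk a t),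
      p = w1.append (Walk.cons hadj w2) ∧ (∀ z ∈ w1.support, z ∉ A) ∧ a ∈ A
  | s, _, Walk.nil, hs, hmem => by
    exfalso; obtain ⟨y, hy, hyA⟩ := hmem
    simp only [Walk.support_nil, List.mem_singleton] at hy
    exact hs (hy ▸ hyA)
  | s, t, Walk.cons (v := b) h q, hs, hmem => by
    by_cases hbA : b ∈ A
    · exact ⟨s, b, Walk.nil, h, q, by rw [Walk.nil_append], by simp [hs], hbA⟩
    · have hmem' : ∃ y ∈ q.support, y ∈ A := by
        obtain ⟨y, hy, hyA⟩ := hmem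
        rw [Walk.support_cons, List.mem_cons] at hy
        rcases hy with rfl | hy
        · exact absurd hyA hs
        · exact ⟨y, hy, hyA⟩
      obtain ⟨u, a, w1, hadj, w2, heq, hw1, haA⟩ := first_entry A q hbA hmem'
      exact ⟨u, a, Walk.cons h w1, hadj, w2, by rw [Walk.cons_append, heq],
        fun z hz => by
          rw [Walk.support_cons, List.mem_cons] at hz
          rcases hz with rfl | hz
          · exact hs
          · exact hw1 z hz, haA⟩

/-- maximal prefix of a walk inside a set (first exit) -/
lemma first_exit (A : Set V) : ∀ {a t : V} (p : G.Walk a t), a ∈ A → t ∉ A →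
    ∃ (b v : V) (W : G.Walk a b) (hadj : G.Adj b v) (w3 : G.Walk v t),
      p = W.append (Walk.cons hadj w3) ∧ (∀ z ∈ W.support, z ∈ A) ∧ v ∉ A
  | a, _, Walk.nil, ha, ht => absurd ha ht
  | a, t, Walk.cons (v := b') h q, ha, ht => by
    by_cases hbA : b' ∈ A
    · obtain ⟨b, v, W, hadj, w3, heq, hW, hv⟩ := first_exit A q hbA ht
      exact ⟨b, v, Walk.cons h W, hadj, w3, by rw [Walk.cons_append, heq],
        fun z hz => by
          rw [Walk.support_cons, List.mem_cons] at hz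
          rcases hz with rfl | hz
          · exact ha
          · exact hW z hz, hv⟩
    · exact ⟨a, b', Walk.nil, h, q, by rw [Walk.nil_append], by simp [ha], hbA⟩

/-- first crossing edge of a walk from outside a set into it -/
lemma first_crossing (A : Set V) : ∀ {s t : V} (p : G.Walk s t), s ∉ A → t ∈ A →
    ∃ (y₁ y₂ : V), s(y₁, y₂) ∈ p.edges ∧ y₁ ∉ A ∧ y₂ ∈ A ∧ y₂ ∈ p.support
  | s, _, Walk.nil, hs, ht => absurd ht hs
  | s, t, Walk.cons (v := b) h q, hs, ht => by
    by_cases hbA : b ∈ A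
    · exact ⟨s, b, by simp, hs, hbA, by simp⟩
    · obtain ⟨y₁, y₂, he, h1, h2, h3⟩ := first_crossing A q hbA ht
      exact ⟨y₁, y₂, by simp [he], h1, h2, by simp [h3]⟩
lemma induce_walk_to_walk {A : Set V} : ∀ {x y : ↥A} (_ : (G.induce A).Walk x y),
    ∃ w' : G.Walk x y, ∀ z ∈ w'.support, z ∈ A
  | x, _, Walk.nil => ⟨Walk.nil, by simp [x.2]⟩
  | x, y, Walk.cons h q => by
    obtain ⟨w', hw'⟩ := induce_walk_to_walk q
    refine ⟨Walk.cons (by exact h) w', ?_⟩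
    intro z hz
    change z ∈ (x : V) :: w'.support at hz; rw [List.mem_cons] at hz
    rcases hz with rfl | hz
    · exact x.2
    · exact hw' z hz

lemma exists_path_in {A : Set V} (hconn : (G.induce A).Connected)
    {a b : V} (ha : a ∈ A) (hb : b ∈ A) :
    ∃ w : G.Walk a b, w.IsPath ∧ ∀ z ∈ w.support, z ∈ A := by
  classical
  obtain ⟨w⟩ := hconn.preconnected ⟨a, ha⟩ ⟨b, hb⟩
  obtain ⟨w', hw'⟩ := induce_walk_to_walk w
  exact ⟨w'.bypass, w'.bypass_isPath, fun z hz => hw' z (w'.support_bypass_subset hz)⟩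
lemma rotate_support_mem {r x : V} [DecidableEq V] (D : G.Walk r r) (hD : ¬ D.Nil)
    (hx : x ∈ D.support) : ∀ s, s ∈ (D.rotate x hx).support ↔ s ∈ D.support := by
  have tail_mem : ∀ s, s ∈ D.support ↔ s ∈ D.support.tail := by
    intro s
    constructor
    · intro hs
      rw [Walk.support_eq_cons] at hs
      rcases List.mem_cons.1 hs with rfl | h'
      · exact end_mem_support_tail D hD
      · exact h'
    · intro hs
      rw [Walk.support_eq_cons]; exact List.mem_cons.2 (Or.inr hs)
  intro s
  rw [tail_mem s, Walk.support_eq_cons (p := D.rotate x hx), List.mem_cons,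
    (Walk.support_rotate D x hx).perm.mem_iff]
  constructor
  · rintro (h | h)
    · exact h ▸ (tail_mem x).1 hx
    · exact h
  · exact Or.inr

variable (Bal : Set (Sym2 V) → Prop) (VR : Set V)

/-- The target conclusion, with the "outside vertices" bounded by a set `O`. -/
def Conc (O : Set V) : Prop :=
  ∃ (c' : V) (C' : G.Walk c' c'), C'.IsCycle ∧ ¬ Bal {e | e ∈ C'.edges} ∧
    (∃ (s t : V) (p : G.Walk s t), p.IsPath ∧
      (∀ y ∈ p.support, y ∈ VR) ∧
      (∀ y : V, (y ∈ C'.support ∧ y ∈ VR) ↔ y ∈ p.support)) ∧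
    (∃ u v : V, {y | y ∈ C'.support ∧ y ∈ nbhd G VR} ⊆ {u, v}) ∧
    {y | y ∈ C'.support ∧ y ∉ VR} ⊆ O

variable {Bal VR}

lemma Conc.mono {O O' : Set V} (h : Conc (G := G) Bal VR O) (hsub : O ⊆ O') :
    Conc (G := G) Bal VR O' := by
  obtain ⟨c', C', h1, h2, h3, h4, h5⟩ := h
  exact ⟨c', C', h1, h2, h3, h4, h5.trans hsub⟩

/-- The clean configuration: one arc through `VR`, rest outside `VR ∪ N(VR)`. -/
lemma clean_case {u a b v : V} (hua : G.Adj u a) (W : G.Walk a b) (hbv : G.Adj b v)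
    (τ : G.Walk v u)
    (hcyc : ((Walk.cons hua (W.concat hbv)).append τ).IsCycle)
    (hunb : ¬ Bal {e | e ∈ ((Walk.cons hua (W.concat hbv)).append τ).edges})
    (hW : ∀ z ∈ W.support, z ∈ VR) (hu : u ∉ VR) (hv : v ∉ VR)
    (hτ1 : ∀ z ∈ τ.support, z ∉ VR)
    (hτ2 : ∀ z ∈ τ.support, z ∈ nbhd G VR → z = u ∨ z = v) :
    Conc (G := G) Bal VR
      {y | y ∈ ((Walk.cons hua (W.concat hbv)).append τ).support ∧ y ∉ VR} := by
  set D₁ := (Walk.cons hua (W.concat hbv)).append τ with hD₁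
  have hsupp₁ : (Walk.cons hua (W.concat hbv)).support = u :: (W.support ++ [v]) := by
    rw [Walk.support_cons, Walk.support_concat]
  have hmem : ∀ s, s ∈ D₁.support ↔ (s = u ∨ s ∈ W.support ∨ s = v ∨ s ∈ τ.support) := by
    intro s
    rw [hD₁, Walk.mem_support_append_iff, hsupp₁]
    simp only [List.mem_cons, List.mem_append, List.mem_singleton]
    tauto
  have hWnd : W.support.Nodup := by
    have h := hcyc.support_nodup
    rw [Walk.tail_support_append] at h
    have h1 := (List.nodup_append.1 h).1
    rw [Walk.support_cons, List.tail_cons, Walk.support_concat] at h1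
    exact (List.nodup_append.1 h1).1
  refine ⟨u, D₁, hcyc, hunb, ⟨a, b, W, Walk.isPath_def W |>.2 hWnd, hW, ?_⟩, ⟨u, v, ?_⟩, ?_⟩
  · intro y
    constructor
    · rintro ⟨hyD, hyVR⟩
      rcases (hmem y).1 hyD with rfl | h | rfl | h
      · exact absurd hyVR hu
      · exact h
      · exact absurd hyVR hv
      · exact absurd hyVR (hτ1 y h)
    · intro hy
      exact ⟨(hmem y).2 (Or.inr (Or.inl hy)), hW y hy⟩
  · rintro y ⟨hyD, hyN⟩
    have hyVR : y ∉ VR := hyN.1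
    rcases (hmem y).1 hyD with rfl | h | rfl | h
    · exact Or.inl rfl
    · exact absurd (hW y h) hyVR
    · exact Or.inr rfl
    · rcases hτ2 y h hyN with rfl | rfl
      · exact Or.inl rfl
      · exact Or.inr rfl
  · exact fun y hy => hy

lemma main_lemma (hlin : IsLinearClass G Bal) (hconn : (G.induce VR).Connected)
    (hbal : BalancedOn G Bal VR) :
    ∀ n : ℕ, ∀ (r : V) (D : G.Walk r r), D.IsCycle → ¬ Bal {e | e ∈ D.edges} →
      (∃ y ∈ D.support, y ∈ VR) →
      ({y | y ∈ D.support ∧ y ∉ VR}).ncard ≤ n →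
      Conc (G := G) Bal VR {y | y ∈ D.support ∧ y ∉ VR} := by
  intro n
  induction n using Nat.strong_induction_on with
  | _ n ih =>
  intro r D hD hunb hmeet hcard
  classical
  -- a vertex outside VR
  have ho : ∃ o ∈ D.support, o ∉ VR := by
    by_contra h
    push_neg at h
    exact hunb (hbal r D hD h)
  obtain ⟨o, hoD, hoVR⟩ := ho
  have hDnil : ¬ D.Nil := hD.isCircuit.not_nil
  set R₀ := D.rotate o hoD with hR₀
  have hR₀cyc : R₀.IsCycle := hD.rotate hoD
  have hR₀sup : ∀ s, s ∈ R₀.support ↔ s ∈ D.support := rotate_support_mem D hDnil hoD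
  have hR₀edg : ∀ e, e ∈ R₀.edges ↔ e ∈ D.edges :=
    fun e => (Walk.rotate_edges D o hoD).perm.mem_iff
  -- first entry into VR
  obtain ⟨u, a, w1, hua, w2, hR₀eq, hw1, haVR⟩ := first_entry VR R₀ hoVR
    (by obtain ⟨y, hy, hy2⟩ := hmeet; exact ⟨y, (hR₀sup y).2 hy, hy2⟩)
  have huVR : u ∉ VR := hw1 u (Walk.end_mem_support w1)
  -- first exit from VR
  obtain ⟨b, v, W, hbv, w3, hw2eq, hW, hvVR⟩ := first_exit VR w2 haVR hoVR
  subst hw2eq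
  -- re-rooted cycle
  set p₁ : G.Walk u v := Walk.cons hua (W.concat hbv) with hp₁
  set τ : G.Walk v u := w3.append w1 with hτ
  set D₁ : G.Walk u u := p₁.append τ with hD₁
  have hmix : (Walk.cons hua ((W.append (Walk.cons hbv w3)))).append w1 = D₁ := by
    rw [hD₁, hp₁, hτ, Walk.concat_eq_append]
    simp only [← Walk.append_assoc, Walk.cons_nil_append, Walk.nil_append, Walk.cons_append]
  have hcyc₁ : D₁.IsCycle := by
    rw [← hmix]
    exact isCycle_swap (hR₀eq ▸ hR₀cyc)
  have hsupD₁ : ∀ s, s ∈ D₁.support ↔ s ∈ D.support := by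
    intro s
    rw [← hR₀sup s, hR₀eq, ← hmix, Walk.mem_support_append_iff, Walk.mem_support_append_iff,
      or_comm]
  have hedgD₁ : ∀ e, e ∈ D₁.edges ↔ e ∈ D.edges := by
    intro e
    rw [← hR₀edg e, hR₀eq, ← hmix, Walk.edges_append, Walk.edges_append, List.mem_append,
      List.mem_append, or_comm]
  have hunb₁ : ¬ Bal {e | e ∈ D₁.edges} := by
    have : {e | e ∈ D₁.edges} = {e | e ∈ D.edges} := Set.ext fun e => hedgD₁ e
    rw [this]; exact hunb
  have houtD₁ : {y | y ∈ D₁.support ∧ y ∉ VR} = {y | y ∈ D.support ∧ y ∉ VR} :=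
    Set.ext fun y => by rw [Set.mem_setOf_eq, Set.mem_setOf_eq, hsupD₁ y]
  rw [← houtD₁]
  -- support decomposition of D₁
  have hsupp₁ : p₁.support = u :: (W.support ++ [v]) := by
    rw [hp₁, Walk.support_cons, Walk.support_concat]
  have hWp₁ : ∀ s ∈ W.support, s ∈ p₁.support := by
    intro s hs; rw [hsupp₁]; exact List.mem_cons.2 (Or.inr (List.mem_append.2 (Or.inl hs)))
  -- the whole-cycle case u = v
  by_cases huv : u = v
  · subst huv
    have hτnil : τ.support = [u] := by
      have : τ.Nil := by
        by_contra hne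
        have h1 : u ∈ τ.support.tail := end_mem_support_tail τ hne
        have h2 : u ∈ p₁.support.tail := by
          rw [hsupp₁, List.tail_cons]
          exact List.mem_append.2 (Or.inr (List.mem_singleton.2 rfl))
        have := hcyc₁.support_nodup
        rw [hD₁, Walk.tail_support_append] at this
        exact (List.nodup_append.1 this).2.2 u h2 u h1 rfl
      exact Walk.nil_iff_support_eq.1 this
    refine clean_case hua W hbv τ hcyc₁ hunb₁ hW huVR huVR ?_ ?_
    · intro z hz; rw [hτnil, List.mem_singleton] at hz; exact hz ▸ huVR
    · intro z hz _; rw [hτnil, List.mem_singleton] at hz; exact Or.inl hz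
  -- main case: u ≠ v
  obtain ⟨hp₁path, hτpath, hdisj₁⟩ := split_of_append_cycle huv (hD₁ ▸ hcyc₁)
  by_cases hclean : ∀ z ∈ τ.support, z = u ∨ z = v ∨ (z ∉ VR ∧ z ∉ nbhd G VR)
  · refine clean_case hua W hbv τ hcyc₁ hunb₁ hW huVR hvVR ?_ ?_
    · intro z hz
      rcases hclean z hz with rfl | rfl | ⟨h1, -⟩
      · exact huVR
      · exact hvVR
      · exact h1
    · intro z hz hzN
      rcases hclean z hz with rfl | rfl | ⟨-, h2⟩
      · exact Or.inl rfl
      · exact Or.inr rfl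
      · exact absurd hzN h2
  -- there is a bad vertex on the τ side
  push_neg at hclean
  obtain ⟨z₀, hz₀τ, hz₀u, hz₀v, hz₀bad⟩ := hclean
  have hz₀bad' : z₀ ∈ VR ∨ z₀ ∈ nbhd G VR := by tauto
  have haW : a ∈ W.support := Walk.start_mem_support W
  -- minimal chord search
  have hex : ∃ m : ℕ, ∃ (z x : V) (R : G.Walk z x), R.IsPath ∧ z ∈ τ.support ∧ z ≠ u ∧ z ≠ v ∧
      x ∈ W.support ∧ (∀ s ∈ R.support, s = z ∨ s ∈ VR) ∧ R.length = m := by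
    rcases hz₀bad' with hz₀VR | hz₀N
    · obtain ⟨w, hwp, hwVR⟩ := exists_path_in hconn hz₀VR (hW a haW)
      exact ⟨w.length, z₀, a, w, hwp, hz₀τ, hz₀u, hz₀v, haW,
        fun s hs => Or.inr (hwVR s hs), rfl⟩
    · obtain ⟨hz₀VR, a', ha'VR, ha'z⟩ := hz₀N
      obtain ⟨w, hwp, hwVR⟩ := exists_path_in hconn ha'VR (hW a haW)
      refine ⟨(Walk.cons (ha'z.symm) w).bypass.length, z₀, a,
        (Walk.cons (ha'z.symm) w).bypass, Walk.bypass_isPath _, hz₀τ, hz₀u, hz₀v, haW,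
        ?_, rfl⟩
      intro s hs
      have := Walk.support_bypass_subset _ hs
      rw [Walk.support_cons, List.mem_cons] at this
      rcases this with rfl | h
      · exact Or.inl rfl
      · exact Or.inr (hwVR s h)
  obtain ⟨z, x, R, hRp, hzτ, hzu, hzv, hxW, hRVR, hRlen⟩ := Nat.find_spec hex
  -- facts about the chord
  have hzp₁ : z ∉ p₁.support := by
    intro h
    rcases hdisj₁ z h hzτ with rfl | rfl
    · exact hzu rfl
    · exact hzv rfl
  have hxVR : x ∈ VR := hW x hxW
  have hzx : z ≠ x := fun h => hzp₁ (h ▸ hWp₁ x hxW)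
  have hint : ∀ s ∈ R.support, s ∈ D₁.support → s = z ∨ s = x := by
    intro s hsR hsD
    rcases hRVR s hsR with rfl | hsVR
    · exact Or.inl rfl
    rcases (Walk.mem_support_append_iff p₁ τ).1 (hD₁ ▸ hsD) with hsp | hsτ
    · -- s is on the W-arc
      have hsW : s ∈ W.support := by
        rw [hsupp₁] at hsp
        rcases List.mem_cons.1 hsp with rfl | h
        · exact absurd hsVR huVR
        rcases List.mem_append.1 h with h | h
        · exact h
        · rw [List.mem_singleton] at h; exact absurd (h ▸ hsVR) hvVR
      by_contra hcon
      push_neg at hcon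
      obtain ⟨-, hsx⟩ := hcon
      -- shorter chord: the prefix up to s
      have hlt : (R.takeUntil s hsR).length < R.length := by
        have hsp := Walk.take_spec R hsR
        have := congrArg Walk.length hsp
        rw [Walk.length_append] at this
        have hd0 : (R.dropUntil s hsR).length ≠ 0 := fun h0 =>
          hsx (Walk.eq_of_length_eq_zero h0)
        omega
      rw [hRlen] at hlt
      exact Nat.find_min hex hlt ⟨z, s, R.takeUntil s hsR, hRp.takeUntil hsR, hzτ, hzu, hzv,
        hsW, fun t ht => hRVR t (Walk.support_takeUntil_subset R hsR ht), rfl⟩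
    · -- s is on the τ side
      have hsu : s ≠ u := fun h => huVR (h ▸ hsVR)
      have hsv : s ≠ v := fun h => hvVR (h ▸ hsVR)
      by_cases hsz : s = z
      · exact Or.inl hsz
      have hlt : (R.dropUntil s hsR).length < R.length := by
        have hsp := Walk.take_spec R hsR
        have := congrArg Walk.length hsp
        rw [Walk.length_append] at this
        have hd0 : (R.takeUntil s hsR).length ≠ 0 := fun h0 =>
          hsz (Walk.eq_of_length_eq_zero h0).symm
        omega
      rw [hRlen] at hlt
      refine absurd (Nat.find_min hex hlt ⟨s, x, R.dropUntil s hsR, hRp.dropUntil hsR, hsτ,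
        hsu, hsv, hxW, ?_, rfl⟩) (fun h => h)
      intro t ht
      rcases hRVR t (Walk.support_dropUntil_subset R hsR ht) with heq | h
      · -- t = z cannot be in the drop part
        exfalso
        have hnd := hRp.support_nodup
        rw [← Walk.take_spec R hsR, Walk.support_append] at hnd
        have hdup := (List.nodup_append.1 hnd).2.2
        have h1 : t ∈ (R.takeUntil s hsR).support := by
          rw [heq]; exact Walk.start_mem_support _
        have h2 : t ∈ (R.dropUntil s hsR).support.tail := by
          rw [Walk.support_eq_cons (p := R.dropUntil s hsR)] at ht
          rcases List.mem_cons.1 ht with h | h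
          · exact absurd (heq.symm.trans h) (fun hh => hsz hh.symm)
          · exact h
        exact hdup t h1 t h2 rfl
      · exact Or.inr h
  -- split D₁ at z and x
  have hzD₁ : z ∈ D₁.support := by
    rw [hD₁, Walk.mem_support_append_iff]; exact Or.inr hzτ
  have hxD₁ : x ∈ D₁.support := by
    rw [hD₁, Walk.mem_support_append_iff]; exact Or.inl (hWp₁ x hxW)
  obtain ⟨σ₂, τ₂, hσ₂p, hτ₂p, hsup₂, hedg₂, hdisj₂⟩ := cycle_split D₁ hcyc₁ hzD₁ hxD₁ hzx
  -- crossing: each side contains u or v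
  have crossing : ∀ (S : G.Walk z x), (∀ e ∈ S.edges, e ∈ D₁.edges) →
      ∃ μ, (μ = u ∨ μ = v) ∧ μ ∈ S.support := by
    intro S hSE
    obtain ⟨y₁, y₂, he, h1, h2, h3⟩ :=
      first_crossing {s | s ∈ p₁.support} S hzp₁ (hWp₁ x hxW)
    have heD := hSE _ he
    rw [hD₁, Walk.edges_append, List.mem_append] at heD
    rcases heD with h | h
    · exact absurd (Walk.fst_mem_support_of_mem_edges p₁ h) h1
    · have hy₂τ : y₂ ∈ τ.support := Walk.snd_mem_support_of_mem_edges τ h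
      exact ⟨y₂, (hdisj₁ y₂ h2 hy₂τ), h3⟩
  obtain ⟨μσ, hμσuv, hμσS⟩ := crossing σ₂ (fun e he => (hedg₂ e).2 (Or.inl he))
  obtain ⟨μτ, hμτuv, hμτS⟩ := crossing τ₂ (fun e he => (hedg₂ e).2 (Or.inr he))
  have huvz : ∀ μ : V, (μ = u ∨ μ = v) → μ ≠ z ∧ μ ≠ x := by
    rintro μ (rfl | rfl)
    · exact ⟨fun h => hzu h.symm, fun h => huVR (h ▸ hxVR)⟩
    · exact ⟨fun h => hzv h.symm, fun h => hvVR (h ▸ hxVR)⟩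
  have hμτσ : μτ ∉ σ₂.support := by
    intro h
    rcases hdisj₂ μτ h hμτS with h' | h'
    · exact (huvz μτ hμτuv).1 h'
    · exact (huvz μτ hμτuv).2 h'
  have hμστ : μσ ∉ τ₂.support := by
    intro h
    rcases hdisj₂ μσ hμσS h with h' | h'
    · exact (huvz μσ hμσuv).1 h'
    · exact (huvz μσ hμσuv).2 h'
  -- theta and linearity
  have htheta : IsTheta G R σ₂ τ₂ :=
    ⟨hzx, hRp, hσ₂p, hτ₂p,
      fun s hsR hsσ => hint s hsR ((hsup₂ s).2 (Or.inl hsσ)),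
      fun s hsR hsτ => hint s hsR ((hsup₂ s).2 (Or.inr hsτ)),
      hdisj₂⟩
  have hnotboth : ¬ (Bal {e | e ∈ R.edges ∨ e ∈ σ₂.edges} ∧
      Bal {e | e ∈ R.edges ∨ e ∈ τ₂.edges}) := by
    rintro ⟨h1, h2⟩
    have := hlin z x R σ₂ τ₂ htheta h1 h2
    have heq : {e | e ∈ σ₂.edges ∨ e ∈ τ₂.edges} = {e | e ∈ D₁.edges} :=
      Set.ext fun e => (hedg₂ e).symm
    exact hunb₁ (heq ▸ this)
  -- common construction for whichever side is unbalanced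
  have finish : ∀ (S : G.Walk z x) (μS μO : V), S.IsPath →
      (∀ s ∈ S.support, s ∈ D₁.support) →
      (μS = u ∨ μS = v) → μS ∈ S.support → (μO = u ∨ μO = v) → μO ∈ D₁.support →
      μO ∉ S.support →
      ¬ Bal {e | e ∈ R.edges ∨ e ∈ S.edges} →
      Conc (G := G) Bal VR {y | y ∈ D₁.support ∧ y ∉ VR} := by
    intro S μS μO hSp hSin hμSuv hμSS hμOuv hμOD hμOS hSunb
    have hμOVR : μO ∉ VR := by rcases hμOuv with rfl | rfl; exacts [huVR, hvVR]
    have hSdisj : ∀ s ∈ S.support, s ∈ R.support → s = z ∨ s = x := by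
      intro s hs hsR
      rcases hint s hsR (hSin s hs) with h | h
      · exact Or.inl h
      · exact Or.inr h
    have hSlen : 2 ≤ S.length :=
      two_le_length_of_mem S hμSS (huvz μS hμSuv).1 (huvz μS hμSuv).2
    have hcycE : (S.append R.reverse).IsCycle :=
      cycle_glue hSp hRp hzx hSlen (fun s hs hsR => hSdisj s hs hsR)
    set E := S.append R.reverse with hE
    have hEsup : ∀ s, s ∈ E.support ↔ (s ∈ S.support ∨ s ∈ R.support) := by
      intro s
      rw [hE, Walk.mem_support_append_iff, Walk.support_reverse, List.mem_reverse]
    have hEedg : {e | e ∈ E.edges} = {e | e ∈ R.edges ∨ e ∈ S.edges} := by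
      ext e
      rw [Set.mem_setOf_eq, Set.mem_setOf_eq, hE, Walk.edges_append, List.mem_append,
        Walk.edges_reverse, List.mem_reverse, or_comm]
    have hEunb : ¬ Bal {e | e ∈ E.edges} := by rw [hEedg]; exact hSunb
    have hEmeet : ∃ y ∈ E.support, y ∈ VR := ⟨x, (hEsup x).2 (Or.inl (Walk.end_mem_support S)),
      hxVR⟩
    have houtE : {y | y ∈ E.support ∧ y ∉ VR} ⊆ {y | y ∈ D.support ∧ y ∉ VR} \ {μO} := by
      rintro y ⟨hyE, hyVR⟩
      have hyD : y ∈ D.support := by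
        rcases (hEsup y).1 hyE with h | h
        · exact (hsupD₁ y).1 (hSin y h)
        · rcases hRVR y h with rfl | h'
          · exact (hsupD₁ y).1 hzD₁
          · exact absurd h' hyVR
      refine ⟨⟨hyD, hyVR⟩, ?_⟩
      rw [Set.mem_singleton_iff]
      intro heq2
      rcases (hEsup y).1 hyE with h | h
      · exact hμOS (heq2 ▸ h)
      · rcases hRVR y h with heq | h'
        · exact (huvz μO hμOuv).1 (heq2 ▸ heq)
        · exact hyVR h'
    have houtD_fin : ({y | y ∈ D.support ∧ y ∉ VR}).Finite :=
      (D.support.finite_toSet).subset (fun y hy => hy.1)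
    have hμOout : μO ∈ {y | y ∈ D.support ∧ y ∉ VR} := ⟨(hsupD₁ μO).1 hμOD, hμOVR⟩
    have hltcard : ({y | y ∈ E.support ∧ y ∉ VR}).ncard < n := by
      calc ({y | y ∈ E.support ∧ y ∉ VR}).ncard
          ≤ ({y | y ∈ D.support ∧ y ∉ VR} \ {μO}).ncard :=
            Set.ncard_le_ncard houtE houtD_fin.diff
        _ < ({y | y ∈ D.support ∧ y ∉ VR}).ncard :=
            Set.ncard_diff_singleton_lt_of_mem hμOout houtD_fin
        _ ≤ n := hcard
    have hrec := ih ({y | y ∈ E.support ∧ y ∉ VR}).ncard hltcard z E hcycE hEunb hEmeet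
      (le_refl _)
    rw [houtD₁]
    exact hrec.mono (fun y hy => (houtE hy).1)
  rcases not_and_or.1 hnotboth with h | h
  · exact finish σ₂ μσ μτ hσ₂p (fun s hs => (hsup₂ s).2 (Or.inl hs)) hμσuv hμσS hμτuv
      ((hsup₂ μτ).2 (Or.inr hμτS)) hμτσ h
  · exact finish τ₂ μτ μσ hτ₂p (fun s hs => (hsup₂ s).2 (Or.inr hs)) hμτuv hμτS hμσuv
      ((hsup₂ μσ).2 (Or.inl hμσS)) hμστ h

end Helpers

/-- Lemma 1: given a balanced connected region `VR` and an
unbalanced cycle `C`, either `C` meets `N(VR)` in at most one vertex, or some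
unbalanced cycle `C'` meets `VR` in a nonempty simple path, meets `N(VR)` in at
most two vertices, and has its vertices outside `VR` among those of `C`. -/
theorem stmt3 {V : Type*} (G : SimpleGraph V) (Bal : Set (Sym2 V) → Prop)
    (hlin : IsLinearClass G Bal) (VR : Set V)
    (hconn : (G.induce VR).Connected)
    (hbal : BalancedOn G Bal VR)
    {c : V} (C : G.Walk c c) (hC : C.IsCycle)
    (hCunb : ¬ Bal {e | e ∈ C.edges}) :
    ({y | y ∈ C.support ∧ y ∈ nbhd G VR} : Set V).Subsingleton ∨
    ∃ (c' : V) (C' : G.Walk c' c'), C'.IsCycle ∧ ¬ Bal {e | e ∈ C'.edges} ∧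
      (∃ (s t : V) (p : G.Walk s t), p.IsPath ∧
        (∀ y ∈ p.support, y ∈ VR) ∧
        (∀ y : V, (y ∈ C'.support ∧ y ∈ VR) ↔ y ∈ p.support)) ∧
      (∃ u v : V, {y | y ∈ C'.support ∧ y ∈ nbhd G VR} ⊆ {u, v}) ∧
      {y | y ∈ C'.support ∧ y ∉ VR} ⊆ {y | y ∈ C.support ∧ y ∉ VR} := by
  classical
  by_cases hss : ({y | y ∈ C.support ∧ y ∈ nbhd G VR} : Set V).Subsingleton
  · exact Or.inl hss
  right
  -- if C meets VR, conclude directly from the main lemma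
  by_cases hCVR : ∃ y ∈ C.support, y ∈ VR
  · exact main_lemma hlin hconn hbal ({y | y ∈ C.support ∧ y ∉ VR}).ncard c C hC hCunb hCVR
      (le_refl _)
  push_neg at hCVR
  -- two distinct vertices of C in the neighbourhood
  rw [Set.not_subsingleton_iff] at hss
  obtain ⟨u, hu, v, hv, huv⟩ := hss
  obtain ⟨huC, huN⟩ := hu
  obtain ⟨hvC, hvN⟩ := hv
  obtain ⟨huVR, a, haVR, hau⟩ := huN
  obtain ⟨hvVR, b, hbVR, hbv⟩ := hvN
  -- chord through VR
  obtain ⟨wab, hwabp, hwabVR⟩ := exists_path_in hconn haVR hbVR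
  set Rb := (wab.concat hbv).bypass with hRb
  have hRbp : Rb.IsPath := Walk.bypass_isPath _
  have hRbsup : ∀ s ∈ Rb.support, s ∈ VR ∨ s = v := by
    intro s hs
    have := Walk.support_bypass_subset _ hs
    rw [Walk.support_concat, List.mem_append, List.mem_singleton] at this
    rcases this with h | h
    · exact Or.inl (hwabVR s h)
    · exact Or.inr h
  set R : G.Walk u v := Walk.cons (hau.symm) Rb with hR
  have hRp : R.IsPath := by
    rw [hR, Walk.cons_isPath_iff]
    refine ⟨hRbp, fun h => ?_⟩
    rcases hRbsup u h with h' | h'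
    · exact huVR h'
    · exact huv h'
  have hRsup : ∀ s ∈ R.support, s = u ∨ s = v ∨ s ∈ VR := by
    intro s hs
    rw [hR, Walk.support_cons, List.mem_cons] at hs
    rcases hs with rfl | hs
    · exact Or.inl rfl
    rcases hRbsup s hs with h | h
    · exact Or.inr (Or.inr h)
    · exact Or.inr (Or.inl h)
  have hRlen : 2 ≤ R.length := by
    rw [hR, Walk.length_cons]
    have : Rb.length ≠ 0 := by
      intro h0
      have : a = v := Walk.eq_of_length_eq_zero h0
      exact hvVR (this ▸ haVR)
    omega
  -- split C at u and v
  obtain ⟨σ, τ, hσp, hτp, hsup, hedg, hdisj⟩ := cycle_split C hC huC hvC huv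
  have hint : ∀ s ∈ R.support, s ∈ C.support → s = u ∨ s = v := by
    intro s hsR hsC
    rcases hRsup s hsR with h | h | h
    · exact Or.inl h
    · exact Or.inr h
    · exact absurd h (hCVR s hsC)
  have htheta : IsTheta G R σ τ :=
    ⟨huv, hRp, hσp, hτp,
      fun s hsR hsσ => hint s hsR ((hsup s).2 (Or.inl hsσ)),
      fun s hsR hsτ => hint s hsR ((hsup s).2 (Or.inr hsτ)),
      hdisj⟩
  have hnotboth : ¬ (Bal {e | e ∈ R.edges ∨ e ∈ σ.edges} ∧
      Bal {e | e ∈ R.edges ∨ e ∈ τ.edges}) := by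
    rintro ⟨h1, h2⟩
    have := hlin u v R σ τ htheta h1 h2
    have heq : {e | e ∈ σ.edges ∨ e ∈ τ.edges} = {e | e ∈ C.edges} :=
      Set.ext fun e => (hedg e).symm
    exact hCunb (heq ▸ this)
  have finish : ∀ (S : G.Walk u v), S.IsPath → (∀ s ∈ S.support, s ∈ C.support) →
      ¬ Bal {e | e ∈ R.edges ∨ e ∈ S.edges} →
      Conc (G := G) Bal VR {y | y ∈ C.support ∧ y ∉ VR} := by
    intro S hSp hSin hSunb
    have hcycE : (R.append S.reverse).IsCycle :=
      cycle_glue hRp hSp huv hRlen (fun s hsR hsS => hint s hsR (hSin s hsS))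
    set E := R.append S.reverse with hE
    have hEsup : ∀ s, s ∈ E.support ↔ (s ∈ R.support ∨ s ∈ S.support) := by
      intro s
      rw [hE, Walk.mem_support_append_iff, Walk.support_reverse, List.mem_reverse]
    have hEedg : {e | e ∈ E.edges} = {e | e ∈ R.edges ∨ e ∈ S.edges} := by
      ext e
      rw [Set.mem_setOf_eq, Set.mem_setOf_eq, hE, Walk.edges_append, List.mem_append,
        Walk.edges_reverse, List.mem_reverse]
    have hEunb : ¬ Bal {e | e ∈ E.edges} := by rw [hEedg]; exact hSunb
    have haR : a ∈ R.support := by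
      rw [hR, Walk.support_cons]
      exact List.mem_cons.2 (Or.inr (Walk.support_bypass_subset _ (Walk.start_mem_support _)))
    have hEmeet : ∃ y ∈ E.support, y ∈ VR := ⟨a, (hEsup a).2 (Or.inl haR), haVR⟩
    have houtE : {y | y ∈ E.support ∧ y ∉ VR} ⊆ {y | y ∈ C.support ∧ y ∉ VR} := by
      rintro y ⟨hyE, hyVR⟩
      refine ⟨?_, hyVR⟩
      rcases (hEsup y).1 hyE with h | h
      · rcases hRsup y h with rfl | rfl | h'
        · exact huC
        · exact hvC
        · exact absurd h' hyVR
      · exact hSin y h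
    have := main_lemma hlin hconn hbal ({y | y ∈ E.support ∧ y ∉ VR}).ncard u E hcycE hEunb
      hEmeet (le_refl _)
    exact this.mono houtE
  rcases not_and_or.1 hnotboth with h | h
  · exact finish σ hσp (fun s hs => (hsup s).2 (Or.inl hs)) h
  · exact finish τ hτp (fun s hs => (hsup s).2 (Or.inr hs)) h
end

section
/- Let (G, B) be a biased graph with root v₀ and x : V → [0,1] with x_{v₀}=0. Under the edge-length metric ℓ_x(uv) = (x_u + x_v)/2, any minimum-weight v₀-balloon B' = (P, C) satisfies w(B') ≥ ℓ_x(C) + 2·min_{v ∈ V(C)} z_x(v), where z_x(v) is the ℓ_x-distance from v₀ to v in G, with equality when B' has minimum weight among all v₀-balloons; in particular the knot vertex of a minimum-weight balloon minimizes z_x over V(C), and the attachment path P is a shortest path. -/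
open SimpleGraph

/-- Length of a walk under the metric `ℓ_x(uv) = (x_u + x_v)/2`. -/
noncomputable def walkLen {V : Type*} {G : SimpleGraph V} (x : V → ℝ) {u v : V} (w : G.Walk u v) : ℝ :=
  (w.darts.map fun d => (x d.toProd.1 + x d.toProd.2) / 2).sum

/-- A `v₀`-balloon: an unbalanced simple cycle `C` through the knot vertex `t`,
together with a simple path `P` from `v₀` to `t` internally disjoint from `C`. -/
def IsBalloon {V : Type*} (G : SimpleGraph V) (Bal : Set (Sym2 V) → Prop)
    (v0 t : V) (P : G.Walk v0 t) (C : G.Walk t t) : Prop :=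
  P.IsPath ∧ C.IsCycle ∧ ¬ Bal {e | e ∈ C.edges} ∧
  ∀ y, y ∈ P.support → y ∈ C.support → y = t

/-- Balloon weight `w(B) = 2 w(P) + w(C)`: coefficient 2 on path vertices (knot counted
`2·(1/2)+1 = 2` overall), coefficient 1 on the other cycle vertices. -/
noncomputable def balloonWeight {V : Type*} {G : SimpleGraph V} {v0 t : V} (x : V → ℝ)
    (P : G.Walk v0 t) (C : G.Walk t t) : ℝ :=
  2 * ((P.support.map x).sum - x t / 2) + (C.support.tail.map x).sum

/-- Shortest-path distance from `v₀` under `ℓ_x`. -/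
noncomputable def zdist {V : Type*} (G : SimpleGraph V) (x : V → ℝ) (v0 v : V) : ℝ :=
  sInf {r : ℝ | ∃ p : G.Walk v0 v, walkLen x p = r}

/-- Feasibility for the local balloon-covering LP. -/
def LPfeasible {V : Type*} (G : SimpleGraph V) (Bal : Set (Sym2 V) → Prop)
    (v0 : V) (x : V → ℝ) : Prop :=
  (∀ v, 0 ≤ x v) ∧ x v0 = 0 ∧
  ∀ (t : V) (P : G.Walk v0 t) (C : G.Walk t t),
    IsBalloon G Bal v0 t P C → 1 ≤ balloonWeight x P C

section auxlemmas

variable {V : Type*} {G : SimpleGraph V} (x : V → ℝ)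

lemma walkLen_nonneg (hx0 : ∀ v, 0 ≤ x v) {u v : V} (w : G.Walk u v) : 0 ≤ walkLen x w := by
  apply List.sum_nonneg
  intro r hr
  simp only [List.mem_map] at hr
  obtain ⟨d, _, rfl⟩ := hr
  have := hx0 d.toProd.1; have := hx0 d.toProd.2; linarith

lemma walkLen_append {u v w : V} (p : G.Walk u v) (q : G.Walk v w) :
    walkLen x (p.append q) = walkLen x p + walkLen x q := by
  simp [walkLen, SimpleGraph.Walk.darts_append]

lemma walkLen_cons {u v w : V} (h : G.Adj u v) (p : G.Walk v w) :
    walkLen x (SimpleGraph.Walk.cons h p) = (x u + x v) / 2 + walkLen x p := by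
  simp [walkLen]

lemma walkLen_eq_support {u v : V} (p : G.Walk u v) :
    walkLen x p = (p.support.map x).sum - x u / 2 - x v / 2 := by
  induction p with
  | nil => simp [walkLen]; ring
  | cons h p ih =>
      rw [walkLen_cons, ih]
      simp [SimpleGraph.Walk.support_cons]
      ring

lemma walkLen_takeUntil_le [DecidableEq V] (hx0 : ∀ v, 0 ≤ x v) {u v w : V} (p : G.Walk v w) (h : u ∈ p.support) :
    walkLen x (p.takeUntil u h) ≤ walkLen x p := by
  conv_rhs => rw [← p.take_spec h]
  rw [walkLen_append]
  have := walkLen_nonneg x hx0 (p.dropUntil u h)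
  linarith

lemma walkLen_dropUntil_le [DecidableEq V] (hx0 : ∀ v, 0 ≤ x v) {u v w : V} (p : G.Walk v w) (h : u ∈ p.support) :
    walkLen x (p.dropUntil u h) ≤ walkLen x p := by
  conv_rhs => rw [← p.take_spec h]
  rw [walkLen_append]
  have := walkLen_nonneg x hx0 (p.takeUntil u h)
  linarith

lemma walkLen_bypass_le [DecidableEq V] (hx0 : ∀ v, 0 ≤ x v) {u v : V} (p : G.Walk u v) :
    walkLen x p.bypass ≤ walkLen x p := by
  induction p with
  | nil => exact le_of_eq rfl
  | @cons a b c h p ih =>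
      rw [SimpleGraph.Walk.bypass]
      split_ifs with hs
      · calc walkLen x (p.bypass.dropUntil _ hs) ≤ walkLen x p.bypass :=
              walkLen_dropUntil_le x hx0 _ hs
          _ ≤ walkLen x p := ih
          _ ≤ walkLen x (SimpleGraph.Walk.cons h p) := by
              rw [walkLen_cons]
              have h1 := hx0 a; have h2 := hx0 b
              linarith
      · rw [walkLen_cons, walkLen_cons]
        linarith

lemma walkLen_rotate [DecidableEq V] {u v : V} (c : G.Walk v v) (h : u ∈ c.support) :
    walkLen x (c.rotate u h) = walkLen x c := by
  unfold walkLen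
  exact ((c.rotate_darts u h).perm.map _).sum_eq

lemma mem_support_cycle_iff_tail {v : V} {c : G.Walk v v} (hc : ¬ c.Nil) {y : V} :
    y ∈ c.support ↔ y ∈ c.support.tail := by
  constructor
  · intro hy
    rw [SimpleGraph.Walk.mem_support_iff] at hy
    rcases hy with rfl | hy
    · cases c with
      | nil => simp at hc
      | cons h p => simpa using p.end_mem_support
    · exact hy
  · intro hy
    rw [SimpleGraph.Walk.support_eq_cons]
    exact List.mem_cons_of_mem _ hy

lemma balloonWeight_eq {V : Type*} {G : SimpleGraph V} {v0 t : V} (x : V → ℝ) (hv0 : x v0 = 0)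
    (P : G.Walk v0 t) (C : G.Walk t t) :
    balloonWeight x P C = 2 * walkLen x P + walkLen x C := by
  have hP := walkLen_eq_support x P
  have hC := walkLen_eq_support x C
  have hCs : (C.support.map x).sum = x t + (C.support.tail.map x).sum := by
    conv_lhs => rw [SimpleGraph.Walk.support_eq_cons C]
    rw [List.map_cons, List.sum_cons]
  unfold balloonWeight
  rw [hv0] at hP
  linarith

lemma trunc {V : Type*} [DecidableEq V] {G : SimpleGraph V} (x : V → ℝ) (hx0 : ∀ v, 0 ≤ x v)
    (v0 : V) (S : List V) :
    ∀ (n : ℕ) {v : V} (Q : G.Walk v0 v), Q.length ≤ n → v ∈ S →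
    ∃ (v' : V), v' ∈ S ∧ ∃ P' : G.Walk v0 v', P'.IsPath ∧
      (∀ y ∈ P'.support, y ∈ S → y = v') ∧ walkLen x P' ≤ walkLen x Q := by
  intro n
  induction n using Nat.strong_induction_on with
  | _ n ih =>
    intro v Q hlen hv
    by_cases hex : ∃ y, y ∈ Q.bypass.support ∧ y ∈ S ∧ y ≠ v
    · obtain ⟨y, hys, hyS, hyne⟩ := hex
      have hdrop : (Q.bypass.dropUntil y hys).length ≠ 0 := fun h0 =>
        hyne (SimpleGraph.Walk.eq_of_length_eq_zero h0)
      have hlens : (Q.bypass.takeUntil y hys).length + (Q.bypass.dropUntil y hys).length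
          = Q.bypass.length := by
        rw [← SimpleGraph.Walk.length_append, SimpleGraph.Walk.take_spec]
      have hb := SimpleGraph.Walk.length_bypass_le Q
      have hlt : (Q.bypass.takeUntil y hys).length < n := by omega
      obtain ⟨v', hv'S, P', hpath, hdisj, hle⟩ :=
        ih _ hlt (Q.bypass.takeUntil y hys) le_rfl hyS
      exact ⟨v', hv'S, P', hpath, hdisj,
        hle.trans ((walkLen_takeUntil_le x hx0 _ hys).trans (walkLen_bypass_le x hx0 Q))⟩
    · push_neg at hex
      exact ⟨v, hv, Q.bypass, Q.bypass_isPath, fun y hy hyS => hex y hy hyS,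
        walkLen_bypass_le x hx0 Q⟩

end auxlemmas

/-- decomposition 1: every balloon satisfies
`w(B) ≥ ℓ_x(C) + 2 · min_{v ∈ V(C)} z_x(v)`, with equality for a minimum-weight
balloon; moreover the knot of a minimum-weight balloon minimises `z_x` over the
cycle and its attachment path is a shortest path. -/
theorem stmt5 {V : Type*} (G : SimpleGraph V) (Bal : Set (Sym2 V) → Prop)
    (v0 t : V) (x : V → ℝ)
    (hx0 : ∀ v, 0 ≤ x v) (hx1 : ∀ v, x v ≤ 1) (hv0 : x v0 = 0)
    (P : G.Walk v0 t) (C : G.Walk t t) (hB : IsBalloon G Bal v0 t P C) :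
    walkLen x C + 2 * sInf {r : ℝ | ∃ v ∈ C.support, zdist G x v0 v = r}
      ≤ balloonWeight x P C ∧
    ((∀ (t' : V) (P' : G.Walk v0 t') (C' : G.Walk t' t'),
        IsBalloon G Bal v0 t' P' C' → balloonWeight x P C ≤ balloonWeight x P' C') →
      balloonWeight x P C
          = walkLen x C + 2 * sInf {r : ℝ | ∃ v ∈ C.support, zdist G x v0 v = r} ∧
      zdist G x v0 t = sInf {r : ℝ | ∃ v ∈ C.support, zdist G x v0 v = r} ∧
      walkLen x P = zdist G x v0 t) := by
  classical
  obtain ⟨hPpath, hCcyc, hCbal, hPC⟩ := hB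
  set S : Set ℝ := {r : ℝ | ∃ v ∈ C.support, zdist G x v0 v = r} with hS
  have hBWeq : balloonWeight x P C = 2 * walkLen x P + walkLen x C :=
    balloonWeight_eq x hv0 P C
  -- walk-length sets
  have hwne : ∀ v ∈ C.support, {r : ℝ | ∃ p : G.Walk v0 v, walkLen x p = r}.Nonempty := by
    intro v hv
    exact ⟨walkLen x (P.append (C.takeUntil v hv)), P.append (C.takeUntil v hv), rfl⟩
  have hwbdd : ∀ v : V, BddBelow {r : ℝ | ∃ p : G.Walk v0 v, walkLen x p = r} := by
    intro v
    exact ⟨0, by rintro r ⟨p, rfl⟩; exact walkLen_nonneg x hx0 p⟩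
  have hznn : ∀ v : V, 0 ≤ zdist G x v0 v := by
    intro v
    apply Real.sInf_nonneg
    rintro r ⟨p, rfl⟩
    exact walkLen_nonneg x hx0 p
  have hSne : S.Nonempty := ⟨zdist G x v0 t, t, C.start_mem_support, rfl⟩
  have hSbdd : BddBelow S := ⟨0, by rintro r ⟨v, hv, rfl⟩; exact hznn v⟩
  have h1 : sInf S ≤ zdist G x v0 t := csInf_le hSbdd ⟨t, C.start_mem_support, rfl⟩
  have h2 : zdist G x v0 t ≤ walkLen x P := csInf_le (hwbdd t) ⟨P, rfl⟩
  refine ⟨by linarith, ?_⟩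
  intro hmin
  have key : ∀ v ∈ C.support, walkLen x P ≤ zdist G x v0 v := by
    intro v hv
    apply le_csInf (hwne v hv)
    rintro r ⟨Q, rfl⟩
    obtain ⟨v', hv'C, P', hpath, hdisj, hle⟩ :=
      trunc x hx0 v0 C.support Q.length Q le_rfl hv
    set C' := C.rotate v' hv'C with hC'
    have hnotnil : ¬ C.Nil := hCcyc.not_nil
    have hcyc' : C'.IsCycle := hCcyc.rotate hv'C
    have hedges : {e : Sym2 V | e ∈ C'.edges} = {e | e ∈ C.edges} :=
      Set.ext fun e => (C.rotate_edges v' hv'C).mem_iff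
    have hsupp' : ∀ y : V, y ∈ C'.support ↔ y ∈ C.support := by
      intro y
      rw [mem_support_cycle_iff_tail hcyc'.not_nil,
        (C.support_rotate v' hv'C).mem_iff, ← mem_support_cycle_iff_tail hnotnil]
    have hB' : IsBalloon G Bal v0 v' P' C' :=
      ⟨hpath, hcyc', by rw [hedges]; exact hCbal,
        fun y hy hyC' => hdisj y hy ((hsupp' y).1 hyC')⟩
    have hm := hmin v' P' C' hB'
    rw [hBWeq, balloonWeight_eq x hv0 P' C', walkLen_rotate] at hm
    linarith
  have hlbS : walkLen x P ≤ sInf S := by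
    apply le_csInf hSne
    rintro r ⟨v, hv, rfl⟩
    exact key v hv
  refine ⟨by linarith, by linarith, by linarith⟩
end

section
/- Let G be the graph obtained from an apex construction: take any graph H = (V, E), add a new vertex v₀ adjacent to all vertices of V, and let the balanced class be B = ∅ (every cycle is unbalanced). Then for any X ⊆ V and k, the connected component of v₀ in G − X is balanced (acyclic) and |X| ≤ k if and only if X is a vertex cover of H of size at most k. In other words, the rooted cleaning problem on (G, ∅) with root v₀ is exactly Vertex Cover on H. -/
open SimpleGraph

/-- The apex graph: add a vertex `none` adjacent to every vertex of `H`. -/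
def apexGraph {V : Type*} (H : SimpleGraph V) : SimpleGraph (Option V) where
  Adj a b := a ≠ b ∧ ∀ u v : V, a = some u → b = some v → H.Adj u v
  symm := ⟨fun a b h => ⟨h.1.symm, fun u v hb ha => (h.2 v u ha hb).symm⟩⟩
  loopless := ⟨fun a h => h.1 rfl⟩

lemma apex_adj_iff {V : Type*} (H : SimpleGraph V) (a b : Option V) :
    (apexGraph H).Adj a b ↔ a ≠ b ∧ ∀ u v : V, a = some u → b = some v → H.Adj u v :=
  Iff.rfl

lemma apex_adj_none_some {V : Type*} (H : SimpleGraph V) (u : V) :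
    (apexGraph H).Adj none (some u) :=
  (apex_adj_iff H _ _).2 ⟨by simp, fun u' v' h _ => by cases h⟩

lemma apex_adj_some_some {V : Type*} {H : SimpleGraph V} {u v : V} (h : H.Adj u v) :
    (apexGraph H).Adj (some u) (some v) :=
  (apex_adj_iff H _ _).2 ⟨by simpa using h.ne, fun u' v' hu hv => by
    cases Option.some_injective _ hu; cases Option.some_injective _ hv; exact h⟩

lemma apex_adj_of_some {V : Type*} {H : SimpleGraph V} {u v : V}
    (h : (apexGraph H).Adj (some u) (some v)) : H.Adj u v :=
  ((apex_adj_iff H _ _).1 h).2 u v rfl rfl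

/-- Every cycle in the apex graph contains an edge between two `some` vertices. -/
lemma cycle_has_some_edge {V : Type*} {H : SimpleGraph V} {a : Option V}
    (w : (apexGraph H).Walk a a) (hw : w.IsCycle) :
    ∃ u v : V, H.Adj u v ∧ some u ∈ w.support ∧ some v ∈ w.support := by
  classical
  by_cases hn : (none : Option V) ∈ w.support
  · -- rotate to start at none
    set w' := w.rotate none hn with hw'
    have hc' : w'.IsCycle := hw.rotate hn
    have hsub : ∀ x, x ∈ w'.support → x ∈ w.support := by
      intro x hx
      rw [hw', Walk.rotate] at hx
      rcases (Walk.mem_support_append_iff _ _).1 hx with h | h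
      · exact Walk.support_dropUntil_subset _ _ h
      · exact Walk.support_takeUntil_subset _ _ h
    clear_value w'
    clear hw hn hw'
    match w', hc' with
    | Walk.nil, hc' => exact absurd rfl hc'.ne_nil
    | Walk.cons h0 Walk.nil, _ => exact absurd rfl h0.1
    | Walk.cons h1 (Walk.cons h2 q), hc' =>
      rename_i x y
      have h3 : 3 ≤ (Walk.cons h1 (Walk.cons h2 q)).length := hc'.three_le_length
      -- x ≠ none
      have hx : x ≠ none := fun hxe => h1.1 hxe.symm
      have hy : y ≠ none := by
        intro hye
        subst hye
        cases q with
        | nil => simp [Walk.length_cons] at h3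
        | cons h4 r =>
          have hnd := hc'.2
          simp only [Walk.support_cons, List.tail_cons, List.nodup_cons] at hnd
          exact hnd.2.1 (Walk.end_mem_support r)
      obtain ⟨u, rfl⟩ := Option.ne_none_iff_exists'.1 hx
      obtain ⟨v, rfl⟩ := Option.ne_none_iff_exists'.1 hy
      refine ⟨u, v, apex_adj_of_some h2, hsub _ ?_, hsub _ ?_⟩
      · simp [Walk.support_cons]
      · simp [Walk.support_cons]
  · -- none not in support: take the first edge
    match w, hw, hn with
    | Walk.cons h1 q, hw, hn =>
      rename_i x
      have ha : a ≠ none := fun h => hn (h ▸ Walk.start_mem_support _)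
      have hx : x ≠ none := fun h => hn (by
        subst h
        exact (Walk.support_cons h1 q) ▸ List.mem_cons_of_mem _ (Walk.start_mem_support q))
      obtain ⟨u, rfl⟩ := Option.ne_none_iff_exists'.1 ha
      obtain ⟨v, rfl⟩ := Option.ne_none_iff_exists'.1 hx
      exact ⟨u, v, apex_adj_of_some h1, Walk.start_mem_support _,
        by simp [Walk.support_cons]⟩

/-- with `B = ∅`, the rooted cleaning problem on the apex graph,
rooted at the apex, is exactly Vertex Cover on `H`. -/
theorem stmt14 {V : Type*} [Fintype V] (H : SimpleGraph V) (X : Set V) (k : ℕ)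
    (comp : Set (Option V))
    (hcomp : comp = {a | ∃ p : (apexGraph H).Walk none a,
        ∀ y ∈ p.support, y ∉ (some '' X : Set (Option V))}) :
    ((∀ (a : Option V) (w : (apexGraph H).Walk a a), w.IsCycle →
        ¬ ∀ y ∈ w.support, y ∈ comp) ∧ X.ncard ≤ k) ↔
    ((∀ u v : V, H.Adj u v → u ∈ X ∨ v ∈ X) ∧ X.ncard ≤ k) := by
  have hmem : ∀ u : V, some u ∈ comp → u ∉ X := by
    intro u hu
    rw [hcomp] at hu
    obtain ⟨p, hp⟩ := hu
    intro hX
    exact hp _ (Walk.end_mem_support p) ⟨u, hX, rfl⟩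
  constructor
  · rintro ⟨hcyc, hk⟩
    refine ⟨fun u v huv => ?_, hk⟩
    by_contra hcon
    push_neg at hcon
    obtain ⟨hu, hv⟩ := hcon
    -- build the triangle none - some u - some v - none
    have h1 := apex_adj_none_some H u
    have h2 := apex_adj_some_some huv
    have h3 := ((apex_adj_none_some H v).symm : (apexGraph H).Adj (some v) none)
    set w : (apexGraph H).Walk none none :=
      Walk.cons h1 (Walk.cons h2 (Walk.cons h3 Walk.nil)) with hwdef
    have huv' : u ≠ v := huv.ne
    have hcycle : w.IsCycle := by
      constructor
      constructor
      · -- trail: edges nodup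
        simp only [hwdef, Walk.edges_cons, Walk.edges_nil, Walk.isTrail_def]
        simp [List.nodup_cons, Sym2.eq_iff, huv']
      · simp [hwdef]
      · simp [hwdef, List.nodup_cons, huv']
    have hsupp : ∀ y ∈ w.support, y ∈ comp := by
      intro y hy
      rw [hcomp]
      have hy' : y = none ∨ y = some u ∨ y = some v ∨ y = none := by
        simpa [hwdef, Walk.support_cons] using hy
      have hnX : (none : Option V) ∉ (some '' X : Set (Option V)) := by
        rintro ⟨z, _, hz⟩; cases hz
      have huX : (some u : Option V) ∉ (some '' X : Set (Option V)) := by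
        rintro ⟨z, hzX, hz⟩; exact hu (Option.some_injective _ hz ▸ hzX)
      have hvX : (some v : Option V) ∉ (some '' X : Set (Option V)) := by
        rintro ⟨z, hzX, hz⟩; exact hv (Option.some_injective _ hz ▸ hzX)
      rcases hy' with rfl | rfl | rfl | rfl
      · exact ⟨Walk.nil, by simpa using hnX⟩
      · exact ⟨Walk.cons h1 Walk.nil, by
          intro y hy; simp [Walk.support_cons] at hy
          rcases hy with rfl | rfl
          exacts [hnX, huX]⟩
      · exact ⟨Walk.cons h1 (Walk.cons h2 Walk.nil), by
          intro y hy; simp [Walk.support_cons] at hy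
          rcases hy with rfl | rfl | rfl
          exacts [hnX, huX, hvX]⟩
      · exact ⟨Walk.nil, by simpa using hnX⟩
    exact hcyc _ w hcycle hsupp
  · rintro ⟨hvc, hk⟩
    refine ⟨fun a w hw hall => ?_, hk⟩
    obtain ⟨u, v, huv, hu, hv⟩ := cycle_has_some_edge w hw
    rcases hvc u v huv with h | h
    · exact hmem u (hall _ hu) h
    · exact hmem v (hall _ hv) h
end

section
/- Let G = (V, E) be a graph, T ⊆ V a set of terminals, and construct G' by adding a new root v₀ adjacent to a set T' of new vertices, where each t ∈ T is duplicated into deg_G(t) copies in T', each copy attached to a distinct neighbour of t (replacing t). Declare a simple cycle of G' unbalanced iff it passes through v₀ and through two vertices of T' that are copies of distinct terminals of T. Then (a) the class of balanced cycles is linear, so this defines a biased graph; and (b) a set X ⊆ V(G') ∖ ({v₀} ∪ T') makes the component of v₀ in G' − X balanced iff X is a multiway cut in G separating every pair of distinct terminals of T. -/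
open SimpleGraph

/-- Vertex type of the multiway-cut construction: non-terminal vertices of `G`,
terminal copies (one copy of `t ∈ T` per neighbour of `t`), and a root `none`. -/
abbrev MCVert {V : Type*} (G : SimpleGraph V) (T : Set V) : Type _ :=
  Option ({v : V // v ∉ T} ⊕ {p : V × V // p.1 ∈ T ∧ G.Adj p.1 p.2})

/-- The multiway-cut construction: the root is adjacent to every terminal copy,
the copy `(t, u)` of a terminal `t` is attached to the neighbour `u` of `t`
(copies of two adjacent terminals are attached to each other), and non-terminal
adjacencies are inherited from `G`. -/
def mcGraph {V : Type*} (G : SimpleGraph V) (T : Set V) :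
    SimpleGraph (MCVert G T) where
  Adj a b :=
    match a, b with
    | none, none => False
    | none, some (Sum.inl _) => False
    | some (Sum.inl _), none => False
    | none, some (Sum.inr _) => True
    | some (Sum.inr _), none => True
    | some (Sum.inl u), some (Sum.inl v) => G.Adj u.1 v.1
    | some (Sum.inl u), some (Sum.inr c) => c.1.2 = u.1
    | some (Sum.inr c), some (Sum.inl u) => c.1.2 = u.1
    | some (Sum.inr c), some (Sum.inr c') => c.1.2 = c'.1.1 ∧ c'.1.2 = c.1.1
  symm := by
    refine ⟨fun a b h => ?_⟩
    rcases a with _ | (u | c) <;> rcases b with _ | (u' | c') <;>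
      simp_all [SimpleGraph.adj_comm] <;> tauto
  loopless := by
    refine ⟨fun a h => ?_⟩
    rcases a with _ | (u | c)
    · exact h
    · exact G.irrefl h
    · exact G.ne_of_adj c.2.2 h.1.symm

/-- A walk of the multiway-cut graph is balanced iff it does NOT pass through
the root together with two copies of distinct terminals. -/
def mcBal {V : Type*} {G : SimpleGraph V} {T : Set V} {a b : MCVert G T}
    (w : (mcGraph G T).Walk a b) : Prop :=
  ¬ ((none : MCVert G T) ∈ w.support ∧
      ∃ (c c' : {p : V × V // p.1 ∈ T ∧ G.Adj p.1 p.2}),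
        some (Sum.inr c) ∈ w.support ∧ some (Sum.inr c') ∈ w.support ∧
        c.1.1 ≠ c'.1.1)


section Helpers
variable {V : Type*} {G : SimpleGraph V} {T : Set V}

abbrev MCCopy (G : SimpleGraph V) (T : Set V) := {p : V × V // p.1 ∈ T ∧ G.Adj p.1 p.2}

@[simp] lemma mcAdj_none_inr {c : MCCopy G T} :
    (mcGraph G T).Adj none (some (Sum.inr c)) ↔ True := Iff.rfl
@[simp] lemma mcAdj_inr_none {c : MCCopy G T} :
    (mcGraph G T).Adj (some (Sum.inr c)) none ↔ True := Iff.rfl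
@[simp] lemma mcAdj_none_inl {u : {v : V // v ∉ T}} :
    (mcGraph G T).Adj none (some (Sum.inl u)) ↔ False := Iff.rfl
@[simp] lemma mcAdj_inl_none {u : {v : V // v ∉ T}} :
    (mcGraph G T).Adj (some (Sum.inl u)) none ↔ False := Iff.rfl
@[simp] lemma mcAdj_none_none :
    (mcGraph G T).Adj none none ↔ False := Iff.rfl
@[simp] lemma mcAdj_inl_inl {u v : {v : V // v ∉ T}} :
    (mcGraph G T).Adj (some (Sum.inl u)) (some (Sum.inl v)) ↔ G.Adj u.1 v.1 := Iff.rfl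
@[simp] lemma mcAdj_inl_inr {u : {v : V // v ∉ T}} {c : MCCopy G T} :
    (mcGraph G T).Adj (some (Sum.inl u)) (some (Sum.inr c)) ↔ c.1.2 = u.1 := Iff.rfl
@[simp] lemma mcAdj_inr_inl {u : {v : V // v ∉ T}} {c : MCCopy G T} :
    (mcGraph G T).Adj (some (Sum.inr c)) (some (Sum.inl u)) ↔ c.1.2 = u.1 := Iff.rfl
@[simp] lemma mcAdj_inr_inr {c c' : MCCopy G T} :
    (mcGraph G T).Adj (some (Sum.inr c)) (some (Sum.inr c')) ↔
      c.1.2 = c'.1.1 ∧ c'.1.2 = c.1.1 := Iff.rfl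

lemma adj_none {z : MCVert G T} (h : (mcGraph G T).Adj none z) :
    ∃ c : MCCopy G T, z = some (Sum.inr c) := by
  rcases z with _ | (u | c)
  · simp at h
  · simp at h
  · exact ⟨c, rfl⟩

lemma copy_nbr {c : MCCopy G T} {z1 z2 : MCVert G T}
    (h1 : (mcGraph G T).Adj (some (Sum.inr c)) z1)
    (h2 : (mcGraph G T).Adj (some (Sum.inr c)) z2)
    (hne : z1 ≠ z2) : z1 = none ∨ z2 = none := by
  rcases z1 with _ | (u1 | c1)
  · exact Or.inl rfl
  · rcases z2 with _ | (u2 | c2)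
    · exact Or.inr rfl
    · rw [mcAdj_inr_inl] at h1 h2
      exact absurd (show u1 = u2 by ext; rw [← h1, h2]) (fun h => hne (by rw [h]))
    · rw [mcAdj_inr_inl] at h1
      rw [mcAdj_inr_inr] at h2
      exact absurd c2.2.1 (by rw [← h2.1, h1]; exact u1.2)
  · rcases z2 with _ | (u2 | c2)
    · exact Or.inr rfl
    · rw [mcAdj_inr_inl] at h2
      rw [mcAdj_inr_inr] at h1
      exact absurd c1.2.1 (by rw [← h1.1, h2]; exact u2.2)
    · rw [mcAdj_inr_inr] at h1 h2
      refine absurd (show c1 = c2 from ?_) (fun h => hne (by rw [h]))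
      have : c1.1 = c2.1 := by
        have e1 : c1.1.1 = c2.1.1 := by rw [← h1.1, h2.1]
        have e2 : c1.1.2 = c2.1.2 := by rw [h1.2, h2.2]
        exact Prod.ext e1 e2
      exact Subtype.ext this
end Helpers

section WalkHelpers
variable {W : Type*} {G' : SimpleGraph W}

lemma end_mem_tail_support {v : W} (w : G'.Walk v v) (h : ¬w.Nil) :
    v ∈ w.support.tail := by
  cases w with
  | nil => exact absurd Walk.Nil.nil h
  | cons h r => simpa using r.end_mem_support

lemma mem_support_rotate_iff [DecidableEq W] {v u x : W} (w : G'.Walk v v)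
    (hw : ¬w.Nil) (h : u ∈ w.support) :
    x ∈ (w.rotate _ h).support ↔ x ∈ w.support := by
  have hrot := Walk.support_rotate w _ h
  constructor
  · intro hx
    rw [Walk.support_eq_cons (w.rotate _ h)] at hx
    rcases List.mem_cons.mp hx with rfl | hx
    · exact h
    · rw [Walk.support_eq_cons w]
      exact List.mem_cons_of_mem _ (hrot.mem_iff.mp hx)
  · intro hx
    rw [Walk.support_eq_cons w] at hx
    have : x ∈ w.support.tail := by
      rcases List.mem_cons.mp hx with rfl | hx
      · exact end_mem_tail_support w hw
      · exact hx
    rw [Walk.support_eq_cons (w.rotate _ h)]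
    exact List.mem_cons_of_mem _ (hrot.mem_iff.mpr this)

lemma cycle_two_nbrs {z : W} (w : G'.Walk z z) (hw : w.IsCycle) :
    ∃ x y, x ∈ w.support ∧ y ∈ w.support ∧ x ≠ y ∧ G'.Adj z x ∧ G'.Adj z y := by
  cases w with
  | nil => exact absurd hw Walk.IsCycle.not_of_nil
  | @cons _ x _ h r =>
    obtain ⟨y, h2, r2, hrev⟩ := Walk.exists_eq_cons_of_ne h.ne r.reverse
    refine ⟨x, y, ?_, ?_, ?_, h, h2⟩
    · simp [r.start_mem_support]
    · have : y ∈ r.reverse.support := by rw [hrev]; simp [r2.start_mem_support]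
      rw [Walk.support_reverse, List.mem_reverse] at this
      simp [this]
    · intro hxy
      have hnd : (Walk.cons h r).edges.Nodup := hw.edges_nodup
      rw [Walk.edges_cons, List.nodup_cons] at hnd
      have : s(z, y) ∈ r.edges := by
        have : s(z, y) ∈ r.reverse.edges := by rw [hrev]; simp
        rwa [Walk.edges_reverse, List.mem_reverse] at this
      exact hnd.1 (hxy ▸ this)

lemma end_not_mem_takeUntil [DecidableEq W] {u v x : W} (p : G'.Walk u v)
    (hnd : p.support.Nodup) (hx : x ∈ p.support) (hvx : v ≠ x) :
    v ∉ (p.takeUntil x hx).support := by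
  intro hv
  have hsupp : p.support = (p.takeUntil x hx).support ++ (p.dropUntil x hx).support.tail := by
    rw [← Walk.support_append, p.take_spec hx]
  rw [hsupp] at hnd
  have hdisj := (List.nodup_append.mp hnd).2.2
  have hvd : v ∈ (p.dropUntil x hx).support.tail := by
    have h1 := (p.dropUntil x hx).end_mem_support
    rw [Walk.support_eq_cons (p.dropUntil x hx)] at h1
    rcases List.mem_cons.mp h1 with h1 | h1
    · exact absurd h1 hvx
    · exact h1
  exact hdisj v hv v hvd rfl
end WalkHelpers

section CycleRoot
variable {V : Type*} {G : SimpleGraph V} {T : Set V}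

lemma copy_cycle_root {a : MCVert G T} {c : MCCopy G T} (w : (mcGraph G T).Walk a a)
    (hw : w.IsCycle) (hc : some (Sum.inr c) ∈ w.support) :
    (none : MCVert G T) ∈ w.support := by
  classical
  have hnil : ¬w.Nil := fun h => hw.ne_nil (Walk.nil_iff_eq_nil.mp h)
  obtain ⟨x, y, hx, hy, hxy, h1, h2⟩ := cycle_two_nbrs (w.rotate _ hc) (hw.rotate hc)
  rcases copy_nbr h1 h2 hxy with rfl | rfl
  · exact (mem_support_rotate_iff w hnil hc).mp hx
  · exact (mem_support_rotate_iff w hnil hc).mp hy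
end CycleRoot

section PartA
variable {V : Type*} {G : SimpleGraph V} {T : Set V}

lemma mem_app_rev {W : Type*} {G' : SimpleGraph W} {a b x : W} (p q : G'.Walk a b) :
    x ∈ (p.append q.reverse).support ↔ x ∈ p.support ∨ x ∈ q.support := by
  rw [Walk.mem_support_append_iff, Walk.support_reverse, List.mem_reverse]

lemma copy_at_none_endpoint {a b : MCVert G T} (p : (mcGraph G T).Walk a b) (hab : a ≠ b)
    (hA : (none : MCVert G T) = a ∨ none = b) :
    ∃ c : MCCopy G T, some (Sum.inr c) ∈ p.support := by
  rcases hA with rfl | rfl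
  · obtain ⟨x, h, r, rfl⟩ := Walk.exists_eq_cons_of_ne hab p
    obtain ⟨c, rfl⟩ := adj_none h
    exact ⟨c, by simp [r.start_mem_support]⟩
  · obtain ⟨x, h, r, hrev⟩ := Walk.exists_eq_cons_of_ne (Ne.symm hab) p.reverse
    obtain ⟨c, rfl⟩ := adj_none h
    have hm : some (Sum.inr c) ∈ p.reverse.support := by
      rw [hrev]; simp [r.start_mem_support]
    exact ⟨c, by rwa [Walk.support_reverse, List.mem_reverse] at hm⟩
end PartA

lemma partA {V : Type*} (G : SimpleGraph V) (T : Set V) :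
    ∀ (a b : MCVert G T) (p1 p2 p3 : (mcGraph G T).Walk a b),
      IsTheta (mcGraph G T) p1 p2 p3 →
      (p1.append p2.reverse).IsCycle →
      (p1.append p3.reverse).IsCycle →
      (p2.append p3.reverse).IsCycle →
      mcBal (p1.append p2.reverse) → mcBal (p1.append p3.reverse) →
      mcBal (p2.append p3.reverse) := by
  intro a b p1 p2 p3 ht hc12 hc13 hc23 hb12 hb13
  obtain ⟨hab, hp1, hp2, hp3, h12, h13, h23⟩ := ht
  rintro ⟨hnone, c, c', hc, hc', hne⟩
  rw [mem_app_rev] at hnone hc hc'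
  have bal12 : (none : MCVert G T) ∈ p1.support ∨ none ∈ p2.support →
      ∀ d d' : MCCopy G T,
        (some (Sum.inr d) ∈ p1.support ∨ some (Sum.inr d) ∈ p2.support) →
        (some (Sum.inr d') ∈ p1.support ∨ some (Sum.inr d') ∈ p2.support) →
        d.1.1 = d'.1.1 := by
    intro hn d d' hd hd'
    by_contra hdd
    exact hb12 ⟨(mem_app_rev _ _).mpr hn, d, d', (mem_app_rev _ _).mpr hd,
      (mem_app_rev _ _).mpr hd', hdd⟩
  have bal13 : (none : MCVert G T) ∈ p1.support ∨ none ∈ p3.support →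
      ∀ d d' : MCCopy G T,
        (some (Sum.inr d) ∈ p1.support ∨ some (Sum.inr d) ∈ p3.support) →
        (some (Sum.inr d') ∈ p1.support ∨ some (Sum.inr d') ∈ p3.support) →
        d.1.1 = d'.1.1 := by
    intro hn d d' hd hd'
    by_contra hdd
    exact hb13 ⟨(mem_app_rev _ _).mpr hn, d, d', (mem_app_rev _ _).mpr hd,
      (mem_app_rev _ _).mpr hd', hdd⟩
  by_cases hA : (none : MCVert G T) = a ∨ none = b
  · have hn1 : (none : MCVert G T) ∈ p1.support := by
      rcases hA with rfl | rfl
      exacts [p1.start_mem_support, p1.end_mem_support]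
    obtain ⟨c'', hc''⟩ := copy_at_none_endpoint p1 hab hA
    rcases hc with hc2 | hc3 <;> rcases hc' with hc2' | hc3'
    · exact hne (bal12 (Or.inl hn1) c c' (Or.inr hc2) (Or.inr hc2'))
    · have e1 := bal12 (Or.inl hn1) c'' c (Or.inl hc'') (Or.inr hc2)
      have e2 := bal13 (Or.inl hn1) c'' c' (Or.inl hc'') (Or.inr hc3')
      exact hne (e1.symm.trans e2)
    · have e1 := bal13 (Or.inl hn1) c'' c (Or.inl hc'') (Or.inr hc3)
      have e2 := bal12 (Or.inl hn1) c'' c' (Or.inl hc'') (Or.inr hc2')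
      exact hne (e1.symm.trans e2)
    · exact hne (bal13 (Or.inl hn1) c c' (Or.inr hc3) (Or.inr hc3'))
  · push_neg at hA
    rcases hnone with hn2 | hn3
    · have hnop3 : ∀ d : MCCopy G T, some (Sum.inr d) ∈ p3.support → False := by
        intro d hd
        have hroot := copy_cycle_root _ hc13 ((mem_app_rev p1 p3).mpr (Or.inr hd))
        rw [mem_app_rev] at hroot
        rcases hroot with h | h
        · rcases h12 none h hn2 with h' | h'
          exacts [hA.1 h', hA.2 h']
        · rcases h23 none hn2 h with h' | h'
          exacts [hA.1 h', hA.2 h']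
      have hcc : some (Sum.inr c) ∈ p2.support := by
        rcases hc with h | h
        exacts [h, (hnop3 c h).elim]
      have hcc' : some (Sum.inr c') ∈ p2.support := by
        rcases hc' with h | h
        exacts [h, (hnop3 c' h).elim]
      exact hb12 ⟨(mem_app_rev _ _).mpr (Or.inr hn2), c, c',
        (mem_app_rev _ _).mpr (Or.inr hcc), (mem_app_rev _ _).mpr (Or.inr hcc'), hne⟩
    · have hnop2 : ∀ d : MCCopy G T, some (Sum.inr d) ∈ p2.support → False := by
        intro d hd
        have hroot := copy_cycle_root _ hc12 ((mem_app_rev p1 p2).mpr (Or.inr hd))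
        rw [mem_app_rev] at hroot
        rcases hroot with h | h
        · rcases h13 none h hn3 with h' | h'
          exacts [hA.1 h', hA.2 h']
        · rcases h23 none h hn3 with h' | h'
          exacts [hA.1 h', hA.2 h']
      have hcc : some (Sum.inr c) ∈ p3.support := by
        rcases hc with h | h
        exacts [(hnop2 c h).elim, h]
      have hcc' : some (Sum.inr c') ∈ p3.support := by
        rcases hc' with h | h
        exacts [(hnop2 c' h).elim, h]
      exact hb13 ⟨(mem_app_rev _ _).mpr (Or.inr hn3), c, c',
        (mem_app_rev _ _).mpr (Or.inr hcc), (mem_app_rev _ _).mpr (Or.inr hcc'), hne⟩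

section Proj
variable {V : Type*} {G : SimpleGraph V} {T : Set V}

def mcLab (d : V) : MCVert G T → V
  | none => d
  | some (Sum.inl u) => u.1
  | some (Sum.inr c) => c.1.1

lemma mc_adj_proj {d : V} {x z : MCVert G T} (h : (mcGraph G T).Adj x z)
    (hx : x ≠ none) (hz : z ≠ none) : G.Adj (mcLab d x) (mcLab d z) := by
  rcases x with _ | (u | c)
  · exact absurd rfl hx
  · rcases z with _ | (u' | c')
    · exact absurd rfl hz
    · exact h
    · rw [mcAdj_inl_inr] at h
      show G.Adj u.1 c'.1.1
      have := c'.2.2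
      rw [h] at this
      exact this.symm
  · rcases z with _ | (u' | c')
    · exact absurd rfl hz
    · rw [mcAdj_inr_inl] at h
      show G.Adj c.1.1 u'.1
      have := c.2.2
      rwa [h] at this
    · rw [mcAdj_inr_inr] at h
      show G.Adj c.1.1 c'.1.1
      have := c.2.2
      rwa [h.1] at this

def projWalk (d : V) : {x y : MCVert G T} → (w : (mcGraph G T).Walk x y) →
    (∀ z ∈ w.support, z ≠ none) → G.Walk (mcLab d x) (mcLab d y)
  | _, _, Walk.nil, _ => Walk.nil
  | _, _, Walk.cons a r, h =>
      Walk.cons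
        (mc_adj_proj a (h _ (Walk.start_mem_support _))
          (h _ (by simp [r.start_mem_support])))
        (projWalk d r (fun z hz => h z (by simp [hz])))

lemma projWalk_support (d : V) {x y : MCVert G T} (w : (mcGraph G T).Walk x y)
    (h : ∀ z ∈ w.support, z ≠ none) :
    ∀ v ∈ (projWalk d w h).support, ∃ z ∈ w.support, v = mcLab d z := by
  induction w with
  | nil =>
    intro v hv
    simp only [projWalk, Walk.support_nil, List.mem_singleton] at hv
    exact ⟨_, Walk.start_mem_support _, hv⟩
  | cons a r ih =>
    intro v hv
    simp only [projWalk, Walk.support_cons, List.mem_cons] at hv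
    rcases hv with rfl | hv
    · exact ⟨_, Walk.start_mem_support _, rfl⟩
    · obtain ⟨z, hz, rfl⟩ := ih _ v hv
      exact ⟨z, by simp [hz], rfl⟩
end Proj

section PartBrev
variable {V : Type*} {G : SimpleGraph V} {T : Set V}

lemma partB_rev (X : Set V) (hXT : X ∩ T = ∅)
    (hcut : ∀ t ∈ T, ∀ t' ∈ T, t ≠ t' → ∀ p : G.Walk t t', ∃ y ∈ p.support, y ∈ X) :
    ∀ (a : MCVert G T) (w : (mcGraph G T).Walk a a), w.IsCycle →
      (∀ y ∈ w.support,
        (∃ p : (mcGraph G T).Walk none y, ∀ z ∈ p.support,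
          ∀ u : {v : V // v ∉ T}, z = some (Sum.inl u) → u.1 ∉ X) ∧
        (∀ u : {v : V // v ∉ T}, y = some (Sum.inl u) → u.1 ∉ X)) →
      mcBal w := by
  classical
  intro a w hw hconn
  rintro ⟨hnone, c, c', hc, hc', hne⟩
  have hnil : ¬w.Nil := fun h => hw.ne_nil h.eq_nil
  set w₀ := w.rotate _ hnone with hw₀def
  have hcyc : w₀.IsCycle := hw.rotate hnone
  have hnil₀ : ¬w₀.Nil := fun h => hcyc.ne_nil h.eq_nil
  obtain ⟨x, hadj, r, hr⟩ := Walk.not_nil_iff.mp hnil₀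
  have hmemw₀ : ∀ z : MCVert G T, z ∈ w₀.support ↔ z ∈ w.support := fun z =>
    mem_support_rotate_iff w hnil hnone
  have hrsupp : w₀.support = none :: r.support := by rw [hr, Walk.support_cons]
  have hrnd : r.support.Nodup := by
    have h2 := hcyc.2
    rw [hrsupp] at h2
    simpa using h2
  have hcr : some (Sum.inr c) ∈ r.support := by
    have hm : some (Sum.inr c) ∈ w₀.support := (hmemw₀ _).mpr hc
    rw [hrsupp] at hm
    rcases List.mem_cons.mp hm with h | h
    · cases h
    · exact h
  have hc'r : some (Sum.inr c') ∈ r.support := by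
    have hm : some (Sum.inr c') ∈ w₀.support := (hmemw₀ _).mpr hc'
    rw [hrsupp] at hm
    rcases List.mem_cons.mp hm with h | h
    · cases h
    · exact h
  have hrw : ∀ z, z ∈ r.support → z ∈ w.support := fun z hz =>
    (hmemw₀ z).mp (by rw [hrsupp]; exact List.mem_cons_of_mem _ hz)
  -- final contradiction maker, given a projected walk
  have final : ∀ (s s' : MCCopy G T) (seg : (mcGraph G T).Walk
      (some (Sum.inr s)) (some (Sum.inr s'))),
      (∀ z ∈ seg.support, z ≠ none) → (∀ z ∈ seg.support, z ∈ r.support) →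
      s.1.1 ≠ s'.1.1 → False := by
    intro s s' seg hsegnone hsegsub hss
    obtain ⟨y, hy, hyX⟩ := hcut s.1.1 s.2.1 s'.1.1 s'.2.1 hss
      (projWalk s.1.1 seg hsegnone)
    obtain ⟨z, hz, rfl⟩ := projWalk_support _ seg hsegnone y hy
    have hzw : z ∈ w.support := hrw z (hsegsub z hz)
    have hcond := (hconn z hzw).2
    rcases z with _ | (u | d)
    · exact hsegnone _ hz rfl
    · exact hcond u rfl hyX
    · have hmem : d.1.1 ∈ X ∩ T := ⟨hyX, d.2.1⟩
      rw [hXT] at hmem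
      exact hmem
  rcases Classical.em (some (Sum.inr c') ∈ (r.takeUntil (some (Sum.inr c)) hcr).support) with hcase | hcase
  · have hnone_t1 : (none : MCVert G T) ∉ (r.takeUntil _ hcr).support :=
      end_not_mem_takeUntil r hrnd hcr (by simp)
    have hsegsub := Walk.support_dropUntil_subset (r.takeUntil _ hcr) hcase
    refine final c' c ((r.takeUntil _ hcr).dropUntil _ hcase)
      (fun z hz h0 => hnone_t1 (h0 ▸ hsegsub hz))
      (fun z hz => Walk.support_takeUntil_subset r hcr (hsegsub hz)) (Ne.symm hne)
  · have hdecomp : r.support =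
        (r.takeUntil _ hcr).support ++ (r.dropUntil _ hcr).support.tail := by
      rw [← Walk.support_append, r.take_spec hcr]
    have hnd := hrnd
    rw [hdecomp, List.nodup_append] at hnd
    have hd1nd : (r.dropUntil _ hcr).support.Nodup := by
      rw [Walk.support_eq_cons (r.dropUntil _ hcr)]
      refine List.nodup_cons.mpr ⟨fun hmem => ?_, hnd.2.1⟩
      exact hnd.2.2 _ (Walk.end_mem_support (r.takeUntil _ hcr)) _ hmem rfl
    have hcd1 : some (Sum.inr c') ∈ (r.dropUntil _ hcr).support := by
      have := hc'r
      rw [hdecomp] at this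
      rcases List.mem_append.mp this with h | h
      · exact absurd h hcase
      · rw [Walk.support_eq_cons (r.dropUntil _ hcr)]
        exact List.mem_cons_of_mem _ h
    have hnone_seg : (none : MCVert G T) ∉
        ((r.dropUntil _ hcr).takeUntil _ hcd1).support :=
      end_not_mem_takeUntil (r.dropUntil _ hcr) hd1nd hcd1 (by simp)
    refine final c c' ((r.dropUntil _ hcr).takeUntil _ hcd1)
      (fun z hz h0 => hnone_seg (h0 ▸ hz))
      (fun z hz => Walk.support_dropUntil_subset r hcr
        (Walk.support_takeUntil_subset _ hcd1 hz)) hne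
end PartBrev

section Lift
variable {V : Type*} {G : SimpleGraph V} {T : Set V}

def liftWalk : {u v : V} → (w : G.Walk u v) → (hu : u ∉ T) → (hv : v ∉ T) →
    (∀ y ∈ w.support, y ∉ T) →
    (mcGraph G T).Walk (some (Sum.inl ⟨u, hu⟩)) (some (Sum.inl ⟨v, hv⟩))
  | _, _, Walk.nil, _, _, _ => Walk.nil
  | _, _, Walk.cons a r, hu, hv, hs =>
      Walk.cons (by exact a)
        (liftWalk r (hs _ (by simp [r.start_mem_support])) hv
          (fun y hy => hs y (by simp [hy])))

lemma liftWalk_support_map (d : V) : ∀ {u v : V} (w : G.Walk u v) (hu : u ∉ T)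
    (hv : v ∉ T) (h : ∀ y ∈ w.support, y ∉ T),
    ((liftWalk w hu hv h).support).map (mcLab d) = w.support := by
  intro u v w
  induction w with
  | nil => intro hu hv h; simp [liftWalk, mcLab]
  | cons a r ih =>
    intro hu hv h
    simp only [liftWalk, Walk.support_cons, List.map_cons]
    exact congrArg (List.cons _) (ih _ _ _)

lemma liftWalk_mem : ∀ {u v : V} (w : G.Walk u v) (hu : u ∉ T) (hv : v ∉ T)
    (h : ∀ y ∈ w.support, y ∉ T), ∀ z ∈ (liftWalk w hu hv h).support,
    ∃ (y : V) (hy : y ∉ T), y ∈ w.support ∧ z = some (Sum.inl ⟨y, hy⟩) := by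
  intro u v w
  induction w with
  | nil =>
    intro hu hv h z hz
    simp only [liftWalk, Walk.support_nil, List.mem_singleton] at hz
    exact ⟨_, hu, Walk.start_mem_support _, hz⟩
  | cons a r ih =>
    intro hu hv h z hz
    rcases List.mem_cons.mp (show z ∈ _ :: _ from hz) with rfl | hz
    · exact ⟨_, hu, Walk.start_mem_support _, rfl⟩
    · obtain ⟨y, hy, hmem, rfl⟩ := ih _ _ _ z hz
      exact ⟨y, hy, by simp [hmem], rfl⟩

lemma liftWalk_none_not_edges : ∀ {u v : V} (w : G.Walk u v) (hu : u ∉ T)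
    (hv : v ∉ T) (h : ∀ y ∈ w.support, y ∉ T),
    ∀ e ∈ (liftWalk w hu hv h).edges, (none : MCVert G T) ∉ e := by
  intro u v w
  induction w with
  | nil => intro hu hv h e he; simp [liftWalk] at he
  | cons a r ih =>
    intro hu hv h e he
    change e ∈ s(some (Sum.inl ⟨_, hu⟩), _) :: (liftWalk r _ hv _).edges at he
    rcases List.mem_cons.mp he with rfl | he
    · simp
    · exact ih _ _ _ e he
end Lift

section Extract
variable {V : Type*} {G : SimpleGraph V} {T : Set V}

lemma first_terminal : ∀ {v t' : V} (p : G.Walk v t'), t' ∈ T →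
    ∃ s', s' ∈ T ∧ ∃ (q : G.Walk v s') (rest : G.Walk s' t'),
      (∀ y ∈ q.support, y ∈ p.support) ∧ (∀ y ∈ rest.support, y ∈ p.support) ∧
      rest.length ≤ p.length ∧ (∀ y ∈ q.support, y = v ∨ y = s' ∨ y ∉ T) := by
  intro v t' p
  induction p with
  | nil =>
    intro ht'
    exact ⟨_, ht', Walk.nil, Walk.nil, by simp, by simp, le_refl _, by simp⟩
  | @cons v0 u0 t0 a r ih =>
    intro ht'
    rcases Classical.em (u0 ∈ T) with hu | hu
    · refine ⟨u0, hu, Walk.cons a Walk.nil, r, ?_, ?_, ?_, ?_⟩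
      · intro y hy
        simp only [Walk.support_cons, Walk.support_nil, List.mem_cons,
          List.mem_singleton] at hy ⊢
        rcases hy with rfl | rfl | h
        · exact Or.inl rfl
        · exact Or.inr r.start_mem_support
        · cases h
      · intro y hy; simp [hy]
      · simp [Walk.length_cons]
      · intro y hy
        simp only [Walk.support_cons, Walk.support_nil, List.mem_cons,
          List.mem_singleton] at hy
        rcases hy with rfl | rfl | h
        · exact Or.inl rfl
        · exact Or.inr (Or.inl rfl)
        · cases h
    · obtain ⟨s', hs', q', rest, hq'sub, hrsub, hrlen, hq'T⟩ := ih ht'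
      refine ⟨s', hs', Walk.cons a q', rest, ?_, ?_, ?_, ?_⟩
      · intro y hy
        simp only [Walk.support_cons, List.mem_cons] at hy ⊢
        rcases hy with rfl | hy
        · exact Or.inl rfl
        · exact Or.inr (hq'sub y hy)
      · intro y hy
        simp only [Walk.support_cons, List.mem_cons]
        exact Or.inr (hrsub y hy)
      · simp only [Walk.length_cons]; omega
      · intro y hy
        simp only [Walk.support_cons, List.mem_cons] at hy
        rcases hy with rfl | hy
        · exact Or.inl rfl
        · rcases hq'T y hy with rfl | h
          · exact Or.inr (Or.inr hu)
          · exact Or.inr h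

lemma extract_segment : ∀ (n : ℕ) {t t' : V} (p : G.Walk t t'), p.length ≤ n →
    t ∈ T → t' ∈ T → t ≠ t' →
    ∃ (s s' : V), s ∈ T ∧ s' ∈ T ∧ s ≠ s' ∧ ∃ q : G.Walk s s',
      (∀ y ∈ q.support, y ∈ p.support) ∧ (∀ y ∈ q.support, y = s ∨ y = s' ∨ y ∉ T) := by
  intro n
  induction n with
  | zero =>
    intro t t' p hlen ht ht' hne
    cases p with
    | nil => exact absurd rfl hne
    | cons a r => simp [Walk.length_cons] at hlen
  | succ n ih =>
    intro t t' p hlen ht ht' hne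
    cases p with
    | nil => exact absurd rfl hne
    | @cons _ u _ a r =>
      rcases Classical.em (u ∈ T) with hu | hu
      · refine ⟨t, u, ht, hu, a.ne, Walk.cons a Walk.nil, ?_, ?_⟩
        · intro y hy
          simp only [Walk.support_cons, Walk.support_nil, List.mem_cons,
            List.mem_singleton] at hy ⊢
          rcases hy with rfl | rfl | h
          · exact Or.inl rfl
          · exact Or.inr r.start_mem_support
          · cases h
        · intro y hy
          simp only [Walk.support_cons, Walk.support_nil, List.mem_cons,
            List.mem_singleton] at hy
          rcases hy with rfl | rfl | h
          · exact Or.inl rfl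
          · exact Or.inr (Or.inl rfl)
          · cases h
      · obtain ⟨s', hs', q', rest, hq'sub, hrsub, hrlen, hq'T⟩ := first_terminal r ht'
        rcases Classical.em (s' = t) with rfl | hs't
        · -- recurse on rest
          have hrlen' : rest.length ≤ n := by
            simp only [Walk.length_cons] at hlen; omega
          obtain ⟨s1, s2, hs1, hs2, hne12, q, hqsub, hqT⟩ :=
            ih rest hrlen' hs' ht' hne
          refine ⟨s1, s2, hs1, hs2, hne12, q, ?_, hqT⟩
          intro y hy
          simp only [Walk.support_cons, List.mem_cons]
          exact Or.inr (hrsub y (hqsub y hy))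
        · refine ⟨t, s', ht, hs', fun h => hs't h.symm, Walk.cons a q', ?_, ?_⟩
          · intro y hy
            simp only [Walk.support_cons, List.mem_cons] at hy ⊢
            rcases hy with rfl | hy
            · exact Or.inl rfl
            · exact Or.inr (hq'sub y hy)
          · intro y hy
            simp only [Walk.support_cons, List.mem_cons] at hy
            rcases hy with rfl | hy
            · exact Or.inl rfl
            · rcases hq'T y hy with rfl | h
              · exact Or.inr (Or.inr hu)
              · exact Or.inr h
end Extract

section Build
variable {V : Type*} {G : SimpleGraph V} {T : Set V}

lemma build_cycle {X : Set V} {s s' : V} (hs : s ∈ T) (hs' : s' ∈ T) (hss : s ≠ s')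
    (q : G.Walk s s') (hq : q.IsPath) (hT : ∀ y ∈ q.support, y = s ∨ y = s' ∨ y ∉ T)
    (hX : ∀ y ∈ q.support, y ∉ X) :
    ∃ w : (mcGraph G T).Walk none none, w.IsCycle ∧
      (∀ z ∈ w.support, ∀ u : {v : V // v ∉ T}, z = some (Sum.inl u) → u.1 ∉ X) ∧
      ¬ mcBal w := by
  obtain ⟨v₁, h1, r, rfl⟩ := Walk.exists_eq_cons_of_ne hss q
  rw [Walk.cons_isPath_iff] at hq  -- hq : r.IsPath ∧ s ∉ r.support  (name may differ)
  rcases Classical.em (v₁ = s') with rfl | hv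
  · -- triangle case
    have hAB : (⟨(s, v₁), hs, h1⟩ : MCCopy G T) ≠ ⟨(v₁, s), hs', h1.symm⟩ := by
      intro h
      rw [Subtype.mk.injEq, Prod.mk.injEq] at h
      exact hss h.1
    refine ⟨Walk.cons (by simp : (mcGraph G T).Adj none (some (Sum.inr ⟨(s, v₁), hs, h1⟩)))
      (Walk.cons (mcAdj_inr_inr.mpr ⟨rfl, rfl⟩ :
          (mcGraph G T).Adj (some (Sum.inr ⟨(s, v₁), hs, h1⟩))
            (some (Sum.inr ⟨(v₁, s), hs', h1.symm⟩)))
        (Walk.cons (by simp) Walk.nil)), ?_, ?_, ?_⟩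
    · rw [Walk.cons_isCycle_iff]
      constructor
      · rw [Walk.isPath_def]
        simp [hAB]
      · simp [Sym2.eq_iff, hAB, Ne.symm hAB]
    · intro z hz u hzu
      subst hzu
      simp only [Walk.support_cons, Walk.support_nil, List.mem_cons,
        List.mem_singleton, List.not_mem_nil, or_false] at hz
      rcases hz with h | h | h | h <;> simp at h
    · intro hbal
      exact hbal ⟨Walk.start_mem_support _, ⟨(s, v₁), hs, h1⟩, ⟨(v₁, s), hs', h1.symm⟩,
        by simp, by simp, hss⟩
  · -- general case
    have hv₁s : v₁ ≠ s := by
      intro h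
      exact hq.2 (h ▸ r.start_mem_support)
    have hv₁T : v₁ ∉ T := by
      rcases hT v₁ (by simp [r.start_mem_support]) with h | h | h
      · exact absurd h hv₁s
      · exact absurd h hv
      · exact h
    obtain ⟨v₂, h₂, r₂, hrev⟩ := Walk.exists_eq_cons_of_ne (Ne.symm hv) r.reverse
    have hr_eq : r = (Walk.cons h₂ r₂).reverse := by
      rw [← hrev, Walk.reverse_reverse]
    have hrsupp : r.support = r₂.reverse.support ++ [s'] := by
      rw [hr_eq]
      simp [Walk.support_concat, List.concat_eq_append, Walk.support_append, Walk.support_reverse]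
    set mid := r₂.reverse with hmid
    have hrnd : r.support.Nodup := hq.1.2
    have hmid_sub : ∀ y ∈ mid.support, y ∈ r.support := by
      intro y hy; rw [hrsupp]; exact List.mem_append_left _ hy
    have hs'mid : s' ∉ mid.support := by
      intro hmem
      rw [hrsupp] at hrnd
      exact (List.disjoint_of_nodup_append hrnd) hmem (List.mem_singleton_self _)
    have hmidT : ∀ y ∈ mid.support, y ∉ T := by
      intro y hy
      rcases hT y (by simp [hmid_sub y hy]) with rfl | rfl | h
      · exact absurd (hmid_sub y hy) hq.2
      · exact absurd hy hs'mid
      · exact h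
    have hv₂T : v₂ ∉ T := hmidT v₂ mid.end_mem_support
    have hmidnd : mid.support.Nodup := by
      rw [hrsupp] at hrnd
      exact (List.nodup_append.mp hrnd).1
    set M := liftWalk mid hv₁T hv₂T hmidT with hM
    have hMnd : M.support.Nodup := by
      refine List.Nodup.of_map (mcLab s) ?_
      rw [liftWalk_support_map]
      exact hmidnd
    set c1 : MCCopy G T := ⟨(s, v₁), hs, h1⟩ with hc1
    set c2 : MCCopy G T := ⟨(s', v₂), hs', h₂⟩ with hc2
    have hc1c2 : c1 ≠ c2 := by
      intro h
      rw [hc1, hc2, Subtype.mk.injEq, Prod.mk.injEq] at h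
      exact hss h.1
    set tailW : (mcGraph G T).Walk (some (Sum.inl ⟨v₂, hv₂T⟩)) none :=
      Walk.cons (show (mcGraph G T).Adj (some (Sum.inl ⟨v₂, hv₂T⟩)) (some (Sum.inr c2)) by
        exact rfl) (Walk.cons (by simp) Walk.nil) with htailW
    set P : (mcGraph G T).Walk (some (Sum.inr c1)) none :=
      Walk.cons (show (mcGraph G T).Adj (some (Sum.inr c1)) (some (Sum.inl ⟨v₁, hv₁T⟩)) by
        exact rfl) (M.append tailW) with hP
    have hPsupp : P.support = some (Sum.inr c1) :: (M.support ++ [some (Sum.inr c2), none]) := by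
      rw [hP, Walk.support_cons, Walk.support_append, htailW]
      simp
    have hMinl : ∀ z ∈ M.support, ∃ (y : V) (hy : y ∉ T),
        y ∈ mid.support ∧ z = some (Sum.inl ⟨y, hy⟩) := liftWalk_mem mid _ _ _
    refine ⟨Walk.cons (by simp : (mcGraph G T).Adj none (some (Sum.inr c1))) P, ?_, ?_, ?_⟩
    · rw [Walk.cons_isCycle_iff]
      constructor
      · rw [Walk.isPath_def, hPsupp, List.nodup_cons, List.nodup_append]
        refine ⟨?_, hMnd, by simp [hc1c2], ?_⟩
        · intro hmem
          rcases List.mem_append.mp hmem with h | h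
          · obtain ⟨y, hy, _, heq⟩ := hMinl _ h
            cases heq
          · rcases List.mem_cons.mp h with h' | h'
            · rw [Option.some_inj, Sum.inr.injEq] at h'
              exact hc1c2 h'
            · rcases List.mem_singleton.mp h' with h''
              cases h''
        · intro z hzM z' hztail hzz'
          subst hzz'
          obtain ⟨y, hy, _, rfl⟩ := hMinl _ hzM
          rcases List.mem_cons.mp hztail with h' | h'
          · cases h'
          · rcases List.mem_singleton.mp h' with h''
            cases h''
      · intro hmem
        rw [hP] at hmem
        simp only [Walk.edges_cons, Walk.edges_append, htailW, Walk.edges_nil,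
          List.mem_cons, List.mem_append, List.not_mem_nil, or_false] at hmem
        rcases hmem with h | h | h | h
        · rw [Sym2.eq_iff] at h
          simp [hc1c2] at h
        · exact liftWalk_none_not_edges mid _ _ _ _ h (Sym2.mem_mk_left _ _)
        · rw [Sym2.eq_iff] at h
          simp [hc1c2] at h
        · rw [Sym2.eq_iff] at h
          simp [hc1c2] at h
    · intro z hz u hzu
      subst hzu
      rw [Walk.support_cons, hPsupp] at hz
      rcases List.mem_cons.mp hz with h | h
      · cases h
      · rcases List.mem_cons.mp h with h | h
        · cases h
        · rcases List.mem_append.mp h with h | h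
          · obtain ⟨y, hy, hymem, heq⟩ := hMinl _ h
            rw [Option.some_inj, Sum.inl.injEq] at heq
            rw [heq]
            exact hX y (by simp [hmid_sub y hymem])
          · rcases List.mem_cons.mp h with h' | h'
            · cases h'
            · rcases List.mem_singleton.mp h' with h''
              cases h''
    · intro hbal
      refine hbal ⟨Walk.start_mem_support _, c1, c2, ?_, ?_, by rw [hc1, hc2]; exact hss⟩
      · rw [Walk.support_cons, hPsupp]; simp
      · rw [Walk.support_cons, hPsupp]; simp
end Build

section Fwd
variable {V : Type*} {G : SimpleGraph V} {T : Set V}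

lemma partB_fwd (X : Set V)
    (hLHS : ∀ (a : MCVert G T) (w : (mcGraph G T).Walk a a), w.IsCycle →
      (∀ y ∈ w.support,
        (∃ p : (mcGraph G T).Walk none y, ∀ z ∈ p.support,
          ∀ u : {v : V // v ∉ T}, z = some (Sum.inl u) → u.1 ∉ X) ∧
        (∀ u : {v : V // v ∉ T}, y = some (Sum.inl u) → u.1 ∉ X)) → mcBal w) :
    ∀ t ∈ T, ∀ t' ∈ T, t ≠ t' → ∀ p : G.Walk t t', ∃ y ∈ p.support, y ∈ X := by
  classical
  intro t ht t' ht' htne p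
  by_contra hXc
  push_neg at hXc
  obtain ⟨s, s', hsT, hs'T, hss, q, hqsub, hqT⟩ :=
    extract_segment p.length p (le_refl _) ht ht' htne
  have hb₁ : q.bypass.IsPath := Walk.bypass_isPath q
  have hbsub : ∀ y ∈ q.bypass.support, y ∈ q.support := fun y hy =>
    Walk.support_bypass_subset _ hy
  obtain ⟨w, hw, hwX, hwbal⟩ := build_cycle hsT hs'T hss q.bypass hb₁
    (fun y hy => hqT y (hbsub y hy))
    (fun y hy => hXc y (hqsub y (hbsub y hy)))
  refine hwbal (hLHS none w hw ?_)
  intro y hy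
  exact ⟨⟨w.takeUntil y hy, fun z hz u hzu =>
    hwX z (Walk.support_takeUntil_subset w hy hz) u hzu⟩,
    fun u hyu => hwX y hy u hyu⟩
end Fwd

/-- (a) the balanced cycles of the multiway-cut construction form
a linear class; (b) deleting `X` (a set of non-terminal vertices) makes the
component of the root balanced iff `X` is a multiway cut for `(G, T)`. -/
theorem stmt15 {V : Type*} (G : SimpleGraph V) (T : Set V) :
    -- (a) linearity
    (∀ (a b : MCVert G T) (p1 p2 p3 : (mcGraph G T).Walk a b),
      IsTheta (mcGraph G T) p1 p2 p3 →
      (p1.append p2.reverse).IsCycle →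
      (p1.append p3.reverse).IsCycle →
      (p2.append p3.reverse).IsCycle →
      mcBal (p1.append p2.reverse) → mcBal (p1.append p3.reverse) →
      mcBal (p2.append p3.reverse)) ∧
    -- (b) correspondence with multiway cut
    (∀ X : Set V, X ∩ T = ∅ →
      ((∀ (a : MCVert G T) (w : (mcGraph G T).Walk a a), w.IsCycle →
          (∀ y ∈ w.support,
            (∃ p : (mcGraph G T).Walk none y, ∀ z ∈ p.support,
              ∀ u : {v : V // v ∉ T}, z = some (Sum.inl u) → u.1 ∉ X) ∧
            (∀ u : {v : V // v ∉ T}, y = some (Sum.inl u) → u.1 ∉ X)) →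
          mcBal w) ↔
        (∀ t ∈ T, ∀ t' ∈ T, t ≠ t' → ∀ p : G.Walk t t',
          ∃ y ∈ p.support, y ∈ X))) := by
  refine ⟨partA G T, ?_⟩
  intro X hXT
  exact ⟨fun hLHS => partB_fwd X hLHS, fun hcut => partB_rev X hXT hcut⟩
end
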